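/- arXiv:0907.2578 — 10 statements merged into one kernel-verified Lean document; each statement's English description precedes it below -/
import Mathlib

section
/- For every positive integer N ≥ 2, the 2-adic valuation of H_N − 1 equals −⌊log₂ N⌋. -/
/-- The `n`-th harmonic number `H_n = ∑_{i=1}^n 1/i`, as a rational number. -/
def H (n : ℕ) : ℚ := ∑ i ∈ Finset.range n, (1 : ℚ) / (i + 1)

private lemma lt_padicValRat_sum {v : ℤ} (s : Finset ℕ) (F : ℕ → ℚ)
    (hF : ∀ i ∈ s, v < padicValRat 2 (F i)) (h0 : ∑ i ∈ s, F i ≠ 0) :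
    v < padicValRat 2 (∑ i ∈ s, F i) := by
  induction s using Finset.induction_on with
  | empty => simp at h0
  | @insert a t ha ih =>
    rw [Finset.sum_insert ha] at h0 ⊢
    by_cases ht : ∑ i ∈ t, F i = 0
    · rw [ht, add_zero]
      exact hF a (Finset.mem_insert_self a t)
    · refine lt_of_lt_of_le ?_ (padicValRat.min_le_padicValRat_add h0)
      exact lt_min (hF a (Finset.mem_insert_self a t))
        (ih (fun i hi => hF i (Finset.mem_insert_of_mem hi)) ht)

theorem v2_harmonic_sub_one (N : ℕ) (hN : 2 ≤ N) :
    padicValRat 2 (H N - 1) = -(Nat.log 2 N : ℤ) := by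
  set k := Nat.log 2 N with hk
  have h1 : 2 ^ k ≤ N := Nat.pow_log_le_self 2 (by omega)
  have h2 : N < 2 ^ (k + 1) := Nat.lt_pow_succ_log_self (by norm_num) N
  have hk1 : 1 ≤ k := Nat.le_log_of_pow_le (by norm_num) (by simpa using hN)
  set F : ℕ → ℚ := fun i => (1 : ℚ) / (i + 1) with hF
  set m : ℕ := 2 ^ k - 1 with hm
  have hm1 : (m : ℚ) + 1 = (2 : ℚ) ^ k := by
    have : (m : ℕ) + 1 = 2 ^ k := by
      have := Nat.one_le_two_pow (n := k); omega
    exact_mod_cast congrArg (Nat.cast : ℕ → ℚ) this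
  set s : Finset ℕ := (Finset.range N).erase 0 with hs
  -- H N - 1 = ∑ i in s, F i
  have hsum : H N - 1 = ∑ i ∈ s, F i := by
    have h0 : (0 : ℕ) ∈ Finset.range N := Finset.mem_range.mpr (by omega)
    have := Finset.add_sum_erase _ F h0
    have hF0 : F 0 = 1 := by simp [hF]
    rw [H, ← this, hF0]
    ring
  -- m ∈ s
  have hmN : m + 1 ≤ N := by
    have := Nat.one_le_two_pow (n := k); omega
  have hms : m ∈ s := by
    have : 2 ≤ 2 ^ k := by
      calc 2 = 2 ^ 1 := rfl
      _ ≤ 2 ^ k := Nat.pow_le_pow_right (by norm_num) hk1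
    exact Finset.mem_erase.mpr ⟨by omega, Finset.mem_range.mpr (by omega)⟩
  have hsplit : ∑ i ∈ s, F i = F m + ∑ i ∈ s.erase m, F i :=
    (Finset.add_sum_erase _ F hms).symm
  -- valuation of F m
  have hvm : padicValRat 2 (F m) = -(k : ℤ) := by
    rw [hF]
    simp only [one_div, hm1]
    exact padicValRat.self_pow_inv k
  -- each other term has valuation > -k
  have hother : ∀ i ∈ s.erase m, -(k : ℤ) < padicValRat 2 (F i) := by
    intro i hi
    obtain ⟨him, hi0, hiN⟩ : i ≠ m ∧ i ≠ 0 ∧ i < N := by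
      simp only [Finset.mem_erase, Finset.mem_range, hs] at hi
      tauto
    have hne : i + 1 ≠ 2 ^ k := by
      intro h
      apply him
      omega
    have hdvd : ¬ 2 ^ k ∣ (i + 1) := by
      rintro ⟨c, hc⟩
      rcases Nat.lt_or_ge c 2 with hc2 | hc2
      · interval_cases c
        · omega
        · exact hne (by omega)
      · have : 2 ^ (k + 1) ≤ i + 1 := by
          calc 2 ^ (k+1) = 2 ^ k * 2 := by ring
          _ ≤ 2 ^ k * c := Nat.mul_le_mul_left _ hc2
          _ = i + 1 := hc.symm
        omega
    have hvlt : padicValNat 2 (i + 1) < k := by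
      by_contra h
      push_neg at h
      exact hdvd (dvd_trans (pow_dvd_pow 2 h) (pow_padicValNat_dvd))
    have hval : padicValRat 2 (F i) = -(padicValNat 2 (i + 1) : ℤ) := by
      rw [hF]
      simp only [one_div]
      rw [padicValRat.inv]
      congr 1
      have : ((i : ℚ) + 1) = ((i + 1 : ℕ) : ℚ) := by push_cast; ring
      rw [this, padicValRat.of_nat]
    rw [hval]
    omega
  -- positivity of the sum
  have hpos : ∀ i ∈ s, 0 < F i := by
    intro i _
    rw [hF]
    positivity
  rw [hsum, hsplit]
  by_cases hT : ∑ i ∈ s.erase m, F i = 0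
  · rw [hT, add_zero, hvm]
  · have hvT : -(k : ℤ) < padicValRat 2 (∑ i ∈ s.erase m, F i) :=
      lt_padicValRat_sum _ F hother hT
    have hTpos : 0 < ∑ i ∈ s.erase m, F i := by
      rcases Finset.eq_empty_or_nonempty (s.erase m) with he | he
      · simp [he] at hT
      · exact Finset.sum_pos (fun i hi => hpos i (Finset.mem_of_mem_erase hi)) he
    have hFm : F m ≠ 0 := ne_of_gt (hpos m hms)
    have hne0 : F m + ∑ i ∈ s.erase m, F i ≠ 0 := by positivity
    rw [padicValRat.add_eq_of_lt hne0 hFm hT (by rw [hvm]; exact hvT), hvm]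
end

section
/- We have v₅(H_3 − 1) = v₅(H_21 − 1) = v₅(H_23 − 1) = 1, and for all positive integers N not in {1, 3, 21, 23}, v₅(H_N − 1) ≤ 0. -/
instance : Fact (Nat.Prime 5) := ⟨by norm_num⟩

/-- A rational is `Good` if `5` does not divide its denominator. -/
def Good (x : ℚ) : Prop := ¬ (5 ∣ x.den)

lemma good_val {x : ℚ} (hx : Good x) : 0 ≤ padicValRat 5 x := by
  rw [padicValRat_def, padicValNat.eq_zero_of_not_dvd hx]
  simp

lemma good_add {x y : ℚ} (hx : Good x) (hy : Good y) : Good (x + y) := by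
  intro h
  have hd := Rat.add_den_dvd x y
  have h5 : Nat.Prime 5 := by norm_num
  rcases (Nat.Prime.dvd_mul h5).1 (dvd_trans h hd) with h' | h'
  · exact hx h'
  · exact hy h'

lemma good_inv {i : ℕ} (hi : ¬ 5 ∣ i) : Good (1 / (i : ℚ)) := by
  intro h
  apply hi
  have hd : ((Rat.divInt (1 : ℤ) (i : ℤ)).den : ℤ) ∣ (i : ℤ) := Rat.den_dvd 1 (i : ℤ)
  rw [Rat.divInt_eq_div] at hd
  have he : ((1 : ℤ) : ℚ) / ((i : ℤ) : ℚ) = 1 / (i : ℚ) := by push_cast; ring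
  rw [he] at hd
  exact_mod_cast (Int.natCast_dvd_natCast.2 h).trans hd

lemma good_neg_one : Good (-1 : ℚ) := by
  have : ((-1 : ℚ)).den = 1 := rfl
  simp [Good, this]

lemma H_pos {n : ℕ} (h : 1 ≤ n) : 0 < H n := by
  apply Finset.sum_pos
  · intro i _
    positivity
  · exact ⟨0, Finset.mem_range.2 (by omega)⟩

lemma H_mono {a b : ℕ} (h : a ≤ b) : H a ≤ H b := by
  apply Finset.sum_le_sum_of_subset_of_nonneg
  · exact Finset.range_subset_range.2 h
  · intro i _ _
    positivity

lemma H_gt_one {n : ℕ} (h : 2 ≤ n) : 1 < H n := by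
  have h2 : H 2 = 3 / 2 := by norm_num [H, Finset.sum_range_succ]
  have := H_mono h
  rw [h2] at this
  linarith

lemma key (m : ℕ) : ∃ T : ℚ, Good T ∧ H m = 5⁻¹ * H (m / 5) + T := by
  induction m with
  | zero => exact ⟨0, by simp [Good], by norm_num [H]⟩
  | succ m ih =>
    obtain ⟨T, hT, he⟩ := ih
    have hstep : H (m + 1) = H m + 1 / ((m : ℚ) + 1) := by
      simp [H, Finset.sum_range_succ]
    by_cases h5 : 5 ∣ (m + 1)
    · set k := m / 5 with hkdef
      have hk : m + 1 = 5 * (k + 1) := by omega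
      have hq : (m + 1) / 5 = k + 1 := by omega
      refine ⟨T, hT, ?_⟩
      rw [hstep, he, hq]
      have hHq : H (k + 1) = H k + 1 / ((k : ℚ) + 1) := by
        simp [H, Finset.sum_range_succ]
      rw [hHq]
      have hc : ((m : ℚ) + 1) = 5 * ((k : ℚ) + 1) := by exact_mod_cast hk
      rw [hc]
      have hk0 : ((k : ℚ) + 1) ≠ 0 := by positivity
      field_simp
      ring
    · have hq : (m + 1) / 5 = m / 5 := by omega
      refine ⟨T + 1 / ((m : ℚ) + 1), good_add hT ?_, by rw [hstep, he, hq]; ring⟩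
      have hc : ((m : ℚ) + 1) = ((m + 1 : ℕ) : ℚ) := by push_cast; ring
      rw [hc]
      exact good_inv h5

lemma v5five : padicValRat 5 (5 : ℚ) = 1 := by
  have := padicValRat.self (p := 5) (by norm_num)
  simpa using this

lemma vint0 {a : ℤ} (ha : ¬ (5 : ℤ) ∣ a) : padicValRat 5 ((a : ℤ) : ℚ) = 0 := by
  rw [padicValRat.of_int, padicValInt.eq_zero_of_not_dvd ha]
  simp

lemma vle0 {x : ℚ} (a b : ℤ) (hx : x = ((a : ℤ) : ℚ) / ((b : ℤ) : ℚ)) (ha : ¬ (5 : ℤ) ∣ a)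
    (hb : b ≠ 0) : padicValRat 5 x ≤ 0 := by
  have ha0 : a ≠ 0 := by rintro rfl; exact ha (dvd_zero 5)
  rw [hx, padicValRat.div (p := 5) (by exact_mod_cast ha0) (by exact_mod_cast hb),
    vint0 ha, padicValRat.of_int]
  simp

lemma veq1 {x : ℚ} (a b : ℤ) (hx : x = 5 * (((a : ℤ) : ℚ) / ((b : ℤ) : ℚ)))
    (ha : ¬ (5 : ℤ) ∣ a) (hb : ¬ (5 : ℤ) ∣ b) : padicValRat 5 x = 1 := by
  have ha0 : a ≠ 0 := by rintro rfl; exact ha (dvd_zero 5)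
  have hb0 : b ≠ 0 := by rintro rfl; exact hb (dvd_zero 5)
  have hd : ((a : ℤ) : ℚ) / ((b : ℤ) : ℚ) ≠ 0 := by
    apply div_ne_zero <;> exact_mod_cast ‹_›
  rw [hx, padicValRat.mul (by norm_num) hd,
    padicValRat.div (p := 5) (by exact_mod_cast ha0) (by exact_mod_cast hb0),
    vint0 ha, vint0 hb, v5five]
  norm_num

lemma core {x T : ℚ} (hx : x ≠ 0) (hs : x + T ≠ 0) (hvx : padicValRat 5 x ≤ -1)
    (hT : Good T) : padicValRat 5 (x + T) ≤ -1 := by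
  rcases eq_or_ne T 0 with rfl | h
  · simpa using hvx
  · have hne : padicValRat 5 x ≠ padicValRat 5 T := by
      have := good_val hT; omega
    rw [padicValRat.add_eq_min hs hx h hne]
    exact le_trans (min_le_left _ _) hvx

lemma vx {q : ℕ} (h1 : 1 ≤ q) (hv : padicValRat 5 (H q) ≤ 0) :
    padicValRat 5 (5⁻¹ * H q) ≤ -1 := by
  have h0 : H q ≠ 0 := ne_of_gt (H_pos h1)
  rw [padicValRat.mul (by norm_num) h0, padicValRat.inv, v5five]
  omega

lemma descent {m : ℕ} (h5 : 5 ≤ m) (hv : padicValRat 5 (H (m / 5)) ≤ 0) :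
    padicValRat 5 (H m) ≤ -1 := by
  obtain ⟨T, hT, he⟩ := key m
  have hx : (5 : ℚ)⁻¹ * H (m / 5) ≠ 0 :=
    mul_ne_zero (by norm_num) (ne_of_gt (H_pos (by omega)))
  have hs : 5⁻¹ * H (m / 5) + T ≠ 0 := by
    rw [← he]; exact ne_of_gt (H_pos (by omega))
  rw [he]
  exact core hx hs (vx (by omega) hv) hT

lemma descent1 {m : ℕ} (h5 : 5 ≤ m) (hv : padicValRat 5 (H (m / 5)) ≤ 0) :
    padicValRat 5 (H m - 1) ≤ -1 := by
  obtain ⟨T, hT, he⟩ := key m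
  have he' : H m - 1 = 5⁻¹ * H (m / 5) + (T + (-1)) := by rw [he]; ring
  have hx : (5 : ℚ)⁻¹ * H (m / 5) ≠ 0 :=
    mul_ne_zero (by norm_num) (ne_of_gt (H_pos (by omega)))
  have hs : 5⁻¹ * H (m / 5) + (T + (-1)) ≠ 0 := by
    rw [← he']
    exact sub_ne_zero.2 (ne_of_gt (H_gt_one (by omega)))
  rw [he']
  exact core hx hs (vx (by omega) hv) (good_add hT good_neg_one)

lemma He100 : H 100 = (((14466636279520351160221518043104131447711 : ℤ)) : ℚ) / (((2788815009188499086581352357412492142272 : ℤ)) : ℚ) := by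
  norm_num [H, Finset.sum_range_succ]

lemma He101 : H 101 = (((1463919079240743966268954674710929768361083 : ℤ)) : ℚ) / (((281670315928038407744716588098661706369472 : ℤ)) : ℚ) := by
  norm_num [H, Finset.sum_range_succ]

lemma He102 : H 102 = (((1466680552926312970266451896162877432149019 : ℤ)) : ℚ) / (((281670315928038407744716588098661706369472 : ℤ)) : ℚ) := by
  norm_num [H, Finset.sum_range_succ]

lemma He103 : H 103 = (((151349767267338274345189261892875037217718429 : ℤ)) : ℚ) / (((29012042540587955997705808574162155756055616 : ℤ)) : ℚ) := by
  norm_num [H, Finset.sum_range_succ]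

lemma He104 : H 104 = (((151628729214843927768244125436857365638449733 : ℤ)) : ℚ) / (((29012042540587955997705808574162155756055616 : ℤ)) : ℚ) := by
  norm_num [H, Finset.sum_range_succ]

lemma He120 : H 120 = (((18661952910524692834612799443020757786224277983797 : ℤ)) : ℚ) / (((3475956553913558034594585593659201286533187398464 : ℤ)) : ℚ) := by
  norm_num [H, Finset.sum_range_succ]

lemma He121 : H 121 = (((2261572258727401391022743318199170893419670823437901 : ℤ)) : ℚ) / (((420590743023540522185944856832763355670515675214144 : ℤ)) : ℚ) := by
  norm_num [H, Finset.sum_range_succ]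

lemma He122 : H 122 = (((2265019723834151723171808439976488625843199640447853 : ℤ)) : ℚ) / (((420590743023540522185944856832763355670515675214144 : ℤ)) : ℚ) := by
  norm_num [H, Finset.sum_range_succ]

lemma He123 : H 123 = (((2268439160769302459124539698975128978328325784148781 : ℤ)) : ℚ) / (((420590743023540522185944856832763355670515675214144 : ℤ)) : ℚ) := by
  norm_num [H, Finset.sum_range_succ]

lemma He124 : H 124 = (((2271831021600137463335716673627006102164378329916637 : ℤ)) : ℚ) / (((420590743023540522185944856832763355670515675214144 : ℤ)) : ℚ) := by
  norm_num [H, Finset.sum_range_succ]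

lemma hvH100 : padicValRat 5 (H 100) ≤ 0 :=
  vle0 _ _ He100 (by omega) (by norm_num)

lemma hvH100s : padicValRat 5 (H 100 - 1) ≤ 0 :=
  vle0 11677821270331852073640165685691639305439 2788815009188499086581352357412492142272 (by rw [He100]; norm_num) (by omega) (by norm_num)

lemma hvH101 : padicValRat 5 (H 101) ≤ 0 :=
  vle0 _ _ He101 (by omega) (by norm_num)

lemma hvH101s : padicValRat 5 (H 101 - 1) ≤ 0 :=
  vle0 1182248763312705558524238086612268061991611 281670315928038407744716588098661706369472 (by rw [He101]; norm_num) (by omega) (by norm_num)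

lemma hvH102 : padicValRat 5 (H 102) ≤ 0 :=
  vle0 _ _ He102 (by omega) (by norm_num)

lemma hvH102s : padicValRat 5 (H 102 - 1) ≤ 0 :=
  vle0 1185010236998274562521735308064215725779547 281670315928038407744716588098661706369472 (by rw [He102]; norm_num) (by omega) (by norm_num)

lemma hvH103 : padicValRat 5 (H 103) ≤ 0 :=
  vle0 _ _ He103 (by omega) (by norm_num)

lemma hvH103s : padicValRat 5 (H 103 - 1) ≤ 0 :=
  vle0 122337724726750318347483453318712881461662813 29012042540587955997705808574162155756055616 (by rw [He103]; norm_num) (by omega) (by norm_num)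

lemma hvH104 : padicValRat 5 (H 104) ≤ 0 :=
  vle0 _ _ He104 (by omega) (by norm_num)

lemma hvH104s : padicValRat 5 (H 104 - 1) ≤ 0 :=
  vle0 122616686674255971770538316862695209882394117 29012042540587955997705808574162155756055616 (by rw [He104]; norm_num) (by omega) (by norm_num)

lemma hvH120 : padicValRat 5 (H 120) ≤ 0 :=
  vle0 _ _ He120 (by omega) (by norm_num)

lemma hvH120s : padicValRat 5 (H 120 - 1) ≤ 0 :=
  vle0 15185996356611134800018213849361556499691090585333 3475956553913558034594585593659201286533187398464 (by rw [He120]; norm_num) (by omega) (by norm_num)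

lemma hvH121 : padicValRat 5 (H 121) ≤ 0 :=
  vle0 _ _ He121 (by omega) (by norm_num)

lemma hvH121s : padicValRat 5 (H 121 - 1) ≤ 0 :=
  vle0 1840981515703860868836798461366407537749155148223757 420590743023540522185944856832763355670515675214144 (by rw [He121]; norm_num) (by omega) (by norm_num)

lemma hvH122 : padicValRat 5 (H 122) ≤ 0 :=
  vle0 _ _ He122 (by omega) (by norm_num)

lemma hvH122s : padicValRat 5 (H 122 - 1) ≤ 0 :=
  vle0 1844428980810611200985863583143725270172683965233709 420590743023540522185944856832763355670515675214144 (by rw [He122]; norm_num) (by omega) (by norm_num)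

lemma hvH123 : padicValRat 5 (H 123) ≤ 0 :=
  vle0 _ _ He123 (by omega) (by norm_num)

lemma hvH123s : padicValRat 5 (H 123 - 1) ≤ 0 :=
  vle0 1847848417745761936938594842142365622657810108934637 420590743023540522185944856832763355670515675214144 (by rw [He123]; norm_num) (by omega) (by norm_num)

lemma hvH124 : padicValRat 5 (H 124) ≤ 0 :=
  vle0 _ _ He124 (by omega) (by norm_num)

lemma hvH124s : padicValRat 5 (H 124 - 1) ≤ 0 :=
  vle0 1851240278576596941149771816794242746493862654702493 420590743023540522185944856832763355670515675214144 (by rw [He124]; norm_num) (by omega) (by norm_num)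

lemma hvH21 : padicValRat 5 (H 21) ≤ 0 :=
  vle0 18858053 5173168 (by norm_num [H, Finset.sum_range_succ]) (by decide) (by norm_num)

lemma hvH22 : padicValRat 5 (H 22) ≤ 0 :=
  vle0 19093197 5173168 (by norm_num [H, Finset.sum_range_succ]) (by decide) (by norm_num)

lemma hvH23 : padicValRat 5 (H 23) ≤ 0 :=
  vle0 444316699 118982864 (by norm_num [H, Finset.sum_range_succ]) (by decide) (by norm_num)

lemma K : ∀ m, 5 ≤ m → m ≠ 20 → m ≠ 24 → padicValRat 5 (H m) ≤ 0 := by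
  intro m
  induction m using Nat.strong_induction_on with
  | _ m ih =>
    intro h5 h20 h24
    by_cases hsm : m ≤ 24
    · by_cases h19 : m ≤ 19
      · have hq : padicValRat 5 (H (m / 5)) ≤ 0 := by
          have h13 : m / 5 = 1 ∨ m / 5 = 2 ∨ m / 5 = 3 := by omega
          rcases h13 with h | h | h <;> rw [h]
          · exact vle0 1 1 (by norm_num [H, Finset.sum_range_succ]) (by decide) (by norm_num)
          · exact vle0 3 2 (by norm_num [H, Finset.sum_range_succ]) (by decide) (by norm_num)
          · exact vle0 11 6 (by norm_num [H, Finset.sum_range_succ]) (by decide) (by norm_num)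
        linarith [descent (by omega : 5 ≤ m) hq]
      · have hm : m = 21 ∨ m = 22 ∨ m = 23 := by omega
        rcases hm with rfl | rfl | rfl
        · exact hvH21
        · exact hvH22
        · exact hvH23
    · by_cases hqe : m / 5 = 20 ∨ m / 5 = 24
      · have hr : (100 ≤ m ∧ m ≤ 104) ∨ (120 ≤ m ∧ m ≤ 124) := by omega
        have hm : m = 100 ∨ m = 101 ∨ m = 102 ∨ m = 103 ∨ m = 104 ∨
            m = 120 ∨ m = 121 ∨ m = 122 ∨ m = 123 ∨ m = 124 := by omega
        rcases hm with rfl | rfl | rfl | rfl | rfl | rfl | rfl | rfl | rfl | rfl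
        · exact hvH100
        · exact hvH101
        · exact hvH102
        · exact hvH103
        · exact hvH104
        · exact hvH120
        · exact hvH121
        · exact hvH122
        · exact hvH123
        · exact hvH124
      · push_neg at hqe
        have hih := ih (m / 5) (by omega) (by omega) hqe.1 hqe.2
        linarith [descent (by omega : 5 ≤ m) hih]

theorem v5_harmonic_sub_one :
    padicValRat 5 (H 3 - 1) = 1 ∧ padicValRat 5 (H 21 - 1) = 1 ∧
      padicValRat 5 (H 23 - 1) = 1 ∧
      ∀ N : ℕ, 1 ≤ N → N ∉ ({1, 3, 21, 23} : Set ℕ) → padicValRat 5 (H N - 1) ≤ 0 := by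
  refine ⟨?_, ?_, ?_, ?_⟩
  · exact veq1 1 6 (by norm_num [H, Finset.sum_range_succ]) (by decide) (by decide)
  · exact veq1 2736977 5173168 (by norm_num [H, Finset.sum_range_succ]) (by decide) (by decide)
  · exact veq1 65066767 118982864 (by norm_num [H, Finset.sum_range_succ]) (by decide) (by decide)
  · intro N h1 hN
    simp only [Set.mem_insert_iff, Set.mem_singleton_iff, not_or] at hN
    obtain ⟨hN1, hN3, hN21, hN23⟩ := hN
    by_cases h24 : N ≤ 24
    · interval_cases N
      · exact absurd rfl hN1
      · exact vle0 1 2 (by norm_num [H, Finset.sum_range_succ]) (by decide) (by norm_num)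
      · exact absurd rfl hN3
      · exact vle0 13 12 (by norm_num [H, Finset.sum_range_succ]) (by decide) (by norm_num)
      · exact vle0 77 60 (by norm_num [H, Finset.sum_range_succ]) (by decide) (by norm_num)
      · exact vle0 29 20 (by norm_num [H, Finset.sum_range_succ]) (by decide) (by norm_num)
      · exact vle0 223 140 (by norm_num [H, Finset.sum_range_succ]) (by decide) (by norm_num)
      · exact vle0 481 280 (by norm_num [H, Finset.sum_range_succ]) (by decide) (by norm_num)
      · exact vle0 4609 2520 (by norm_num [H, Finset.sum_range_succ]) (by decide) (by norm_num)
      · exact vle0 4861 2520 (by norm_num [H, Finset.sum_range_succ]) (by decide) (by norm_num)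
      · exact vle0 55991 27720 (by norm_num [H, Finset.sum_range_succ]) (by decide) (by norm_num)
      · exact vle0 58301 27720 (by norm_num [H, Finset.sum_range_succ]) (by decide) (by norm_num)
      · exact vle0 785633 360360 (by norm_num [H, Finset.sum_range_succ]) (by decide) (by norm_num)
      · exact vle0 811373 360360 (by norm_num [H, Finset.sum_range_succ]) (by decide) (by norm_num)
      · exact vle0 835397 360360 (by norm_num [H, Finset.sum_range_succ]) (by decide) (by norm_num)
      · exact vle0 1715839 720720 (by norm_num [H, Finset.sum_range_succ]) (by decide) (by norm_num)
      · exact vle0 29889983 12252240 (by norm_num [H, Finset.sum_range_succ]) (by decide) (by norm_num)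
      · exact vle0 10190221 4084080 (by norm_num [H, Finset.sum_range_succ]) (by decide) (by norm_num)
      · exact vle0 197698279 77597520 (by norm_num [H, Finset.sum_range_succ]) (by decide) (by norm_num)
      · exact vle0 40315631 15519504 (by norm_num [H, Finset.sum_range_succ]) (by decide) (by norm_num)
      · exact absurd rfl hN21
      · exact vle0 13920029 5173168 (by norm_num [H, Finset.sum_range_succ]) (by decide) (by norm_num)
      · exact absurd rfl hN23
      · exact vle0 990874363 356948592 (by norm_num [H, Finset.sum_range_succ]) (by decide) (by norm_num)
    · push_neg at h24
      by_cases hq : N / 5 = 20 ∨ N / 5 = 24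
      · have hm : N = 100 ∨ N = 101 ∨ N = 102 ∨ N = 103 ∨ N = 104 ∨
            N = 120 ∨ N = 121 ∨ N = 122 ∨ N = 123 ∨ N = 124 := by omega
        rcases hm with rfl | rfl | rfl | rfl | rfl | rfl | rfl | rfl | rfl | rfl
        · exact hvH100s
        · exact hvH101s
        · exact hvH102s
        · exact hvH103s
        · exact hvH104s
        · exact hvH120s
        · exact hvH121s
        · exact hvH122s
        · exact hvH123s
        · exact hvH124s
      · push_neg at hq
        have hK := K (N / 5) (by omega) hq.1 hq.2
        linarith [descent1 (by omega : 5 ≤ N) hK]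
end

section
/- Let p be a prime with p ≠ 3 and N an integer with p ≤ N. If v_p(H_N) > 0, then N ≥ 3p. -/
lemma padic_sum_nonneg {p : ℕ} [Fact p.Prime] {S : Finset ℕ} {F : ℕ → ℚ}
    (hF : ∀ i ∈ S, 0 ≤ padicValRat p (F i)) (h0 : ∑ i ∈ S, F i ≠ 0) :
    0 ≤ padicValRat p (∑ i ∈ S, F i) := by
  induction S using Finset.cons_induction with
  | empty => simp at h0
  | cons a S ha ih =>
    rw [Finset.sum_cons] at h0 ⊢
    by_cases hs : ∑ i ∈ S, F i = 0
    · rw [hs, add_zero]; exact hF a (Finset.mem_cons_self a S)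
    · refine le_trans (le_min (hF a (Finset.mem_cons_self a S))
        (ih (fun i hi => hF i (Finset.mem_cons_of_mem hi)) hs)) ?_
      exact padicValRat.min_le_padicValRat_add h0

lemma term_val_zero {p : ℕ} [Fact p.Prime] {i : ℕ} (h : ¬ p ∣ (i + 1)) :
    padicValRat p ((1 : ℚ) / (i + 1)) = 0 := by
  have he : (1 : ℚ) / ((i : ℚ) + 1) = (((i + 1 : ℕ) : ℚ))⁻¹ := by push_cast; ring
  rw [he, padicValRat.inv, padicValRat.of_nat, padicValNat.eq_zero_of_not_dvd h]
  simp

theorem vp_harmonic_pos_imp_three_p (p N : ℕ) (hp : p.Prime) (hp3 : p ≠ 3)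
    (hpN : p ≤ N) (h : 0 < padicValRat p (H N)) : 3 * p ≤ N := by
  haveI : Fact p.Prime := ⟨hp⟩
  by_contra hN
  push_neg at hN
  have hp2 : 2 ≤ p := hp.two_le
  set F : ℕ → ℚ := fun i => (1 : ℚ) / (i + 1) with hF
  have hFpos : ∀ i : ℕ, 0 < F i := by
    intro i
    apply div_pos one_pos
    positivity
  have hsplit : H N = (∑ i ∈ (Finset.range N).filter (fun i => p ∣ (i + 1)), F i)
      + (∑ i ∈ (Finset.range N).filter (fun i => ¬ p ∣ (i + 1)), F i) := by
    rw [H, ← Finset.sum_filter_add_sum_filter_not (Finset.range N) (fun i => p ∣ (i + 1)) F]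
  set B := ∑ i ∈ (Finset.range N).filter (fun i => p ∣ (i + 1)), F i with hB
  set A := ∑ i ∈ (Finset.range N).filter (fun i => ¬ p ∣ (i + 1)), F i with hA
  -- valuation of B is negative
  have hBval : padicValRat p B < 0 := by
    rcases lt_or_ge N (2 * p) with h2 | h2
    · -- filter = {p-1}
      have hfil : (Finset.range N).filter (fun i => p ∣ (i + 1)) = {p - 1} := by
        ext i
        simp only [Finset.mem_filter, Finset.mem_range, Finset.mem_singleton]
        constructor
        · rintro ⟨hi, k, hk⟩
          have hk1 : 1 ≤ k := by
            rcases Nat.eq_zero_or_pos k with rfl | hk1; · omega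
            · exact hk1
          have hk2 : k < 2 := by
            have : p * k < p * 2 := by omega
            exact lt_of_mul_lt_mul_left this (Nat.zero_le p)
          (interval_cases k; omega)
        · rintro rfl
          refine ⟨by omega, 1, by omega⟩
      rw [hB, hfil, Finset.sum_singleton]
      have he : F (p - 1) = ((p : ℚ))⁻¹ := by
        simp only [hF, one_div]
        congr 1
        have : ((p - 1 : ℕ) : ℚ) = (p : ℚ) - 1 := by
          push_cast [Nat.cast_sub (by omega : 1 ≤ p)]; ring
        rw [this]; ring
      rw [he, padicValRat.inv, padicValRat.self hp.one_lt]
      norm_num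
    · -- filter = {p-1, 2p-1}
      have hfil : (Finset.range N).filter (fun i => p ∣ (i + 1)) = {p - 1, 2 * p - 1} := by
        ext i
        simp only [Finset.mem_filter, Finset.mem_range, Finset.mem_insert, Finset.mem_singleton]
        constructor
        · rintro ⟨hi, k, hk⟩
          have hk1 : 1 ≤ k := by
            rcases Nat.eq_zero_or_pos k with rfl | hk1; · omega
            · exact hk1
          have hk2 : k < 3 := by
            have : p * k < p * 3 := by omega
            exact lt_of_mul_lt_mul_left this (Nat.zero_le p)
          interval_cases k <;> omega
        · rintro (rfl | rfl)
          · exact ⟨by omega, 1, by omega⟩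
          · exact ⟨by omega, 2, by omega⟩
      have hne : (p - 1 : ℕ) ≠ 2 * p - 1 := by omega
      rw [hB, hfil, Finset.sum_insert (by simpa using hne), Finset.sum_singleton]
      have he : F (p - 1) + F (2 * p - 1) = 3 / ((2 * p : ℕ) : ℚ) := by
        simp only [hF]
        have h1 : ((p - 1 : ℕ) : ℚ) + 1 = (p : ℚ) := by
          push_cast [Nat.cast_sub (by omega : 1 ≤ p)]; ring
        have h2 : ((2 * p - 1 : ℕ) : ℚ) + 1 = 2 * (p : ℚ) := by
          push_cast [Nat.cast_sub (by omega : 1 ≤ 2 * p)]; ring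
        rw [h1, h2]
        have hpq : (p : ℚ) ≠ 0 := by positivity
        push_cast
        field_simp
        ring
      rw [he, padicValRat.div (by norm_num) (by positivity)]
      have h3 : padicValRat p 3 = 0 := by
        have : ¬ p ∣ 3 := by
          intro hd
          exact hp3 ((Nat.prime_dvd_prime_iff_eq hp Nat.prime_three).mp hd)
        rw [show ((3 : ℚ)) = ((3 : ℕ) : ℚ) by norm_num, padicValRat.of_nat,
          padicValNat.eq_zero_of_not_dvd this]
        simp
      have h2p : 1 ≤ padicValRat p ((2 * p : ℕ) : ℚ) := by
        rw [padicValRat.of_nat]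
        exact_mod_cast one_le_padicValNat_of_dvd (by omega) ⟨2, by ring⟩
      omega
  have hHpos : 0 < H N := by
    rw [H]
    apply Finset.sum_pos (fun i _ => hFpos i)
    exact ⟨0, Finset.mem_range.mpr (by omega)⟩
  by_cases hA0 : A = 0
  · rw [hsplit, hA0, add_zero] at h
    omega
  · have hAval : 0 ≤ padicValRat p A := by
      apply padic_sum_nonneg
      · intro i hi
        simp only [Finset.mem_filter] at hi
        rw [hF]
        rw [term_val_zero hi.2]
      · exact hA0
    have hBne : B ≠ 0 := by
      intro hb
      have : padicValRat p B = 0 := by rw [hb]; simp [padicValRat]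
      omega
    have : padicValRat p (B + A) = padicValRat p B := by
      apply padicValRat.add_eq_of_lt _ hBne hA0
      · omega
      · rw [← hsplit]; exact ne_of_gt hHpos
    rw [hsplit, this] at h
    omega
end

section
/- Let p be a prime not in {3, 5, 11} and N an integer with p ≤ N. If v_p(H_N) > 0, then N ≥ 5p. -/
lemma H_eq_harmonic (n : ℕ) : H n = harmonic n := by
  unfold H harmonic
  refine Finset.sum_congr rfl fun i _ => ?_
  push_cast
  rw [one_div]

lemma val_sum_nonneg (p : ℕ) [Fact p.Prime] {α : Type*} (S : Finset α) (F : α → ℚ)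
    (h : ∀ i ∈ S, 0 ≤ padicValRat p (F i)) : 0 ≤ padicValRat p (∑ i ∈ S, F i) := by
  classical
  induction S using Finset.induction_on with
  | empty => simp [padicValRat]
  | @insert a s ha ih =>
    rw [Finset.sum_insert ha]
    by_cases h0 : F a + ∑ i ∈ s, F i = 0
    · rw [h0]; simp [padicValRat]
    · refine le_trans (le_min (h a (Finset.mem_insert_self a s))
        (ih fun i hi => h i (Finset.mem_insert_of_mem hi)))
        (padicValRat.min_le_padicValRat_add (p := p) h0)

lemma val_nat_zero (p m : ℕ) [Fact p.Prime] (h : ¬ p ∣ m) : padicValRat p (m : ℚ) = 0 := by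
  rw [show ((m : ℚ)) = ((m : ℤ) : ℚ) by push_cast; ring, padicValRat.of_int]
  simp [padicValInt, padicValNat.eq_zero_of_not_dvd h]

lemma not_dvd_aux {p : ℕ} (hp : p.Prime) (h7 : 7 ≤ p) (h11 : p ≠ 11) :
    ¬ p ∣ 2 ∧ ¬ p ∣ 3 ∧ ¬ p ∣ 6 ∧ ¬ p ∣ 11 ∧ ¬ p ∣ 12 ∧ ¬ p ∣ 25 := by
  refine ⟨?_, ?_, ?_, ?_, ?_, ?_⟩ <;>
  · intro hd
    have hle := Nat.le_of_dvd (by norm_num) hd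
    interval_cases p <;> revert hp hd h11 <;> decide

lemma sum_mult_eq (p N : ℕ) (hp : 0 < p) :
    ∑ i ∈ (Finset.range N).filter (fun i => p ∣ (i + 1)), (1 : ℚ) / (i + 1)
      = (1 / p) * H (N / p) := by
  rw [H, Finset.mul_sum]
  refine Finset.sum_nbij' (fun i => (i + 1) / p - 1) (fun j => p * (j + 1) - 1)
    ?_ ?_ ?_ ?_ ?_
  · intro a ha
    simp only [Finset.mem_filter, Finset.mem_range] at ha
    obtain ⟨haN, c, hc⟩ := ha
    have hc1 : 1 ≤ c := by nlinarith
    have h1 : (a + 1) / p = c := by rw [hc, Nat.mul_div_cancel_left _ hp]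
    simp only [Finset.mem_range]
    rw [h1]
    have hcN : c * p ≤ N := by rw [mul_comm]; omega
    have hcdiv : c ≤ N / p := (Nat.le_div_iff_mul_le hp).mpr hcN
    omega
  · intro a ha
    simp only [Finset.mem_range] at ha
    have ha' : a + 1 ≤ N / p := ha
    have h2 : p * (a + 1) ≤ N := by
      rw [mul_comm]; exact (Nat.le_div_iff_mul_le hp).mp ha'
    have h1 : 1 ≤ p * (a + 1) := Nat.one_le_iff_ne_zero.mpr (Nat.mul_ne_zero hp.ne' (by omega))
    simp only [Finset.mem_filter, Finset.mem_range]
    refine ⟨by omega, ?_⟩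
    have h3 : p * (a + 1) - 1 + 1 = p * (a + 1) := by omega
    rw [h3]
    exact Dvd.intro _ rfl
  · intro a ha
    simp only [Finset.mem_filter, Finset.mem_range] at ha
    obtain ⟨haN, c, hc⟩ := ha
    have hc1 : 1 ≤ c := by nlinarith
    have h1 : (a + 1) / p = c := by rw [hc, Nat.mul_div_cancel_left _ hp]
    show p * ((a + 1) / p - 1 + 1) - 1 = a
    rw [h1, show c - 1 + 1 = c by omega]
    omega
  · intro a ha
    have h1 : p * (a + 1) - 1 + 1 = p * (a + 1) := by
      have : 1 ≤ p * (a + 1) := Nat.one_le_iff_ne_zero.mpr (Nat.mul_ne_zero hp.ne' (by omega))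
      omega
    show (p * (a + 1) - 1 + 1) / p - 1 = a
    rw [h1, Nat.mul_div_cancel_left _ hp]
    omega
  · intro a ha
    simp only [Finset.mem_filter, Finset.mem_range] at ha
    obtain ⟨haN, c, hc⟩ := ha
    have hc1 : 1 ≤ c := by nlinarith
    have h1 : (a + 1) / p = c := by rw [hc, Nat.mul_div_cancel_left _ hp]
    show (1 : ℚ) / (a + 1) = 1 / p * (1 / (((a + 1) / p - 1 : ℕ) + 1))
    rw [h1, Nat.cast_sub hc1]
    have h2 : ((c : ℚ) - 1 + 1) = c := by ring
    push_cast
    rw [h2]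
    have key : ((a : ℚ) + 1) = (p : ℚ) * c := by exact_mod_cast congrArg (Nat.cast : ℕ → ℚ) hc
    rw [key]
    have hp0 : (p : ℚ) ≠ 0 := Nat.cast_ne_zero.mpr hp.ne'
    have hc0 : (c : ℚ) ≠ 0 := Nat.cast_ne_zero.mpr (by omega)
    field_simp

theorem vp_harmonic_pos_imp_five_p (p N : ℕ) (hp : p.Prime)
    (hp' : p ∉ ({3, 5, 11} : Set ℕ)) (hpN : p ≤ N)
    (h : 0 < padicValRat p (H N)) : 5 * p ≤ N := by
  by_contra hN
  push_neg at hN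
  simp only [Set.mem_insert_iff, Set.mem_singleton_iff, not_or] at hp'
  obtain ⟨h3, h5, h11⟩ := hp'
  haveI : Fact p.Prime := ⟨hp⟩
  by_cases hp2 : p = 2
  · subst hp2
    rw [H_eq_harmonic, padicValRat_two_harmonic] at h
    omega
  · have hp7 : 7 ≤ p := by
      have h2 := hp.two_le
      by_contra h7
      push_neg at h7
      interval_cases p <;> simp_all <;> exact absurd hp (by decide)
    obtain ⟨nd2, nd3, nd6, nd11, nd12, nd25⟩ := not_dvd_aux hp hp7 h11
    have hp0 : 0 < p := by omega
    set k := N / p with hk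
    have hk1 : 1 ≤ k := Nat.one_le_div_iff hp0 |>.mpr hpN
    have hk4 : k ≤ 4 := by
      have : N / p < 5 := Nat.div_lt_of_lt_mul (by omega)
      omega
    -- value of H k
    have hHk : padicValRat p (H k) = 0 := by
      interval_cases k
      · show padicValRat p (H 1) = 0
        have : H 1 = 1 := by norm_num [H]
        rw [this, padicValRat.one]
      · have : H 2 = 3 / 2 := by norm_num [H, Finset.sum_range_succ]
        rw [this, show ((3:ℚ)/2) = ((3:ℕ):ℚ)/((2:ℕ):ℚ) by norm_num,
          padicValRat.div (by norm_num) (by norm_num),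
          val_nat_zero p 3 nd3, val_nat_zero p 2 nd2]
        ring
      · have : H 3 = 11 / 6 := by norm_num [H, Finset.sum_range_succ]
        rw [this, show ((11:ℚ)/6) = ((11:ℕ):ℚ)/((6:ℕ):ℚ) by norm_num,
          padicValRat.div (by norm_num) (by norm_num),
          val_nat_zero p 11 nd11, val_nat_zero p 6 nd6]
        ring
      · have : H 4 = 25 / 12 := by norm_num [H, Finset.sum_range_succ]
        rw [this, show ((25:ℚ)/12) = ((25:ℕ):ℚ)/((12:ℕ):ℚ) by norm_num,
          padicValRat.div (by norm_num) (by norm_num),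
          val_nat_zero p 25 nd25, val_nat_zero p 12 nd12]
        ring
    have hHkpos : 0 < H k := by
      rw [H_eq_harmonic]; exact harmonic_pos (by omega)
    -- split the sum
    have hsplit : H N = (1 / p) * H k +
        ∑ i ∈ (Finset.range N).filter (fun i => ¬ p ∣ (i + 1)), (1 : ℚ) / (i + 1) := by
      rw [← sum_mult_eq p N hp0, H]
      exact (Finset.sum_filter_add_sum_filter_not _ _ _).symm
    set T : ℚ := (1 / p) * H k with hT
    set S : ℚ := ∑ i ∈ (Finset.range N).filter (fun i => ¬ p ∣ (i + 1)), (1 : ℚ) / (i + 1)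
      with hS
    have hTpos : 0 < T := by
      apply mul_pos _ hHkpos
      positivity
    have hSpos : 0 < S := by
      apply Finset.sum_pos
      · intro i hi; positivity
      · refine ⟨0, ?_⟩
        simp only [Finset.mem_filter, Finset.mem_range]
        refine ⟨by omega, fun hdvd => ?_⟩
        have := Nat.le_of_dvd (by omega) hdvd
        omega
    have hvT : padicValRat p T = -1 := by
      rw [hT, padicValRat.mul (one_div_ne_zero (Nat.cast_ne_zero.mpr hp0.ne')) hHkpos.ne', hHk,
        show ((1:ℚ)/p) = ((p:ℚ))⁻¹ by rw [one_div], padicValRat.inv,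
        padicValRat.self hp.one_lt]
      ring
    have hvS : 0 ≤ padicValRat p S := by
      apply val_sum_nonneg
      intro i hi
      simp only [Finset.mem_filter, Finset.mem_range] at hi
      have : (1 : ℚ) / (i + 1) = (((i + 1 : ℕ) : ℚ))⁻¹ := by push_cast; rw [one_div]
      rw [this, padicValRat.inv, val_nat_zero p (i + 1) hi.2]
      norm_num
    have hHN : padicValRat p (H N) = -1 := by
      rw [hsplit, padicValRat.add_eq_of_lt (p := p) (add_pos hTpos hSpos).ne'
        hTpos.ne' hSpos.ne' (by omega), hvT]
    omega
end

section
/- For every prime p ≥ 5 and every positive integer r, the p-adic valuation of H_{rp−1} − H_{rp−p} is at least 2. -/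
open Finset

lemma H_add_sub (n m : ℕ) : H (n + m) - H n = ∑ i ∈ Finset.range m, (1 : ℚ) / (n + i + 1) := by
  induction m with
  | zero => simp [H]
  | succ k ih =>
    have h1 : H (n + (k + 1)) = H (n + k) + 1 / ((n + k : ℕ) + 1) := by
      rw [← add_assoc]
      exact Finset.sum_range_succ _ (n + k)
    rw [h1, Finset.sum_range_succ, ← ih]
    push_cast
    ring

lemma sum_range_zmod {p : ℕ} [NeZero p] (f : ZMod p → ZMod p) :
    ∑ i ∈ Finset.range p, f (i : ZMod p) = ∑ x : ZMod p, f x := by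
  apply Finset.sum_bij' (fun i _ => ((i : ℕ) : ZMod p)) (fun x _ => x.val)
  · intro i hi; exact Finset.mem_univ _
  · intro x _; exact Finset.mem_range.2 (ZMod.val_lt x)
  · intro i hi; exact ZMod.val_cast_of_lt (Finset.mem_range.1 hi)
  · intro x _; exact ZMod.natCast_zmod_val x
  · intro i hi; rfl

lemma sum_inv_sq_zmod {p : ℕ} [hpf : Fact p.Prime] (hp5 : 5 ≤ p) :
    ∑ x : ZMod p, (x⁻¹) ^ 2 = 0 := by
  have h1 : ∑ x : ZMod p, (x⁻¹) ^ 2 = ∑ x : ZMod p, x ^ 2 :=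
    Fintype.sum_bijective Inv.inv inv_involutive.bijective _ _ (fun x => rfl)
  rw [h1]
  exact FiniteField.sum_pow_lt_card_sub_one (ZMod p) 2 (by rw [ZMod.card p]; omega)

theorem wolstenholme_general (p r : ℕ) (hp : p.Prime) (hp5 : 5 ≤ p) (hr : 1 ≤ r) :
    2 ≤ padicValRat p (H (r * p - 1) - H (r * p - p)) := by
  haveI : Fact p.Prime := ⟨hp⟩
  set q := r - 1 with hqdef
  have hr1 : r = q + 1 := by omega
  set a : ℕ → ℕ := fun i => q * p + i + 1 with hadef
  -- Step 1: the difference is the sum of 1/(a i)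
  have hS : H (r * p - 1) - H (r * p - p) = ∑ i ∈ Finset.range (p - 1), (1 : ℚ) / (a i) := by
    have h1 : r * p - p = q * p := by rw [hr1]; rw [add_mul, one_mul, Nat.add_sub_cancel]
    have h2 : r * p - 1 = q * p + (p - 1) := by
      rw [hr1, add_mul, one_mul]
      omega
    rw [h1, h2, H_add_sub]
    apply Finset.sum_congr rfl
    intro i hi
    simp only [hadef]
    push_cast
    ring
  set S : ℚ := ∑ i ∈ Finset.range (p - 1), (1 : ℚ) / (a i) with hSdef
  -- positivity
  have haposQ : ∀ i, (0 : ℚ) < (a i : ℚ) := by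
    intro i
    have : 0 < a i := by simp only [hadef]; omega
    exact_mod_cast this
  have hane : ∀ i, ((a i : ℚ)) ≠ 0 := fun i => ne_of_gt (haposQ i)
  have hSpos : 0 < S := by
    apply Finset.sum_pos
    · intro i _; positivity
    · exact Finset.nonempty_range_iff.2 (by omega)
  -- Step 2: pairing identity
  have hsum_a : ∀ i, i < p - 1 → a i + a (p - 2 - i) = p * (2 * q + 1) := by
    intro i hi
    have hrhs : p * (2 * q + 1) = 2 * (q * p) + p := by ring
    rw [hrhs]
    simp only [hadef]
    generalize q * p = m
    omega
  have key : 2 * S = (p : ℚ) * (2 * q + 1) *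
      ∑ i ∈ Finset.range (p - 1), (1 : ℚ) / ((a i) * (a (p - 2 - i))) := by
    have hrefl : S = ∑ i ∈ Finset.range (p - 1), (1 : ℚ) / (a (p - 2 - i)) := by
      rw [hSdef, ← Finset.sum_range_reflect]
      apply Finset.sum_congr rfl
      intro i hi
      have h12 : p - 1 - 1 - i = p - 2 - i := by omega
      rw [h12]
    calc 2 * S = S + S := two_mul S
    _ = ∑ i ∈ Finset.range (p - 1), ((1 : ℚ) / (a i) + 1 / (a (p - 2 - i))) := by
        rw [Finset.sum_add_distrib, ← hSdef, ← hrefl]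
    _ = ∑ i ∈ Finset.range (p - 1), (p : ℚ) * (2 * q + 1) * (1 / ((a i) * (a (p - 2 - i)))) := by
        apply Finset.sum_congr rfl
        intro i hi
        have hcast : (a i : ℚ) + (a (p - 2 - i) : ℚ) = (p : ℚ) * (2 * q + 1) := by
          exact_mod_cast congrArg (fun n : ℕ => (n : ℚ)) (hsum_a i (Finset.mem_range.1 hi))
        have := hane i
        have := hane (p - 2 - i)
        field_simp
        linarith [mul_comm ((a i : ℚ)) ((a (p - 2 - i)) : ℚ)]
    _ = (p : ℚ) * (2 * q + 1) * ∑ i ∈ Finset.range (p - 1), (1 : ℚ) / ((a i) * (a (p - 2 - i))) := by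
        rw [Finset.mul_sum]
  -- Step 3: p-adic analysis
  haveI : NeZero p := ⟨hp.pos.ne'⟩
  set b : ℕ → ℕ := fun i => a i * a (p - 2 - i) with hbdef
  have hnd : ∀ i, i < p - 1 → ¬ p ∣ a i := by
    intro i hi hdvd
    simp only [hadef] at hdvd
    rw [add_assoc] at hdvd
    have h1 : p ∣ i + 1 := (Nat.dvd_add_right (dvd_mul_left p q)).1 hdvd
    have := Nat.le_of_dvd (by omega) h1
    omega
  have hndb : ∀ i, i < p - 1 → ¬ p ∣ b i := by
    intro i hi hdvd
    rcases (Nat.Prime.dvd_mul hp).1 hdvd with h | h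
    · exact hnd i hi h
    · exact hnd _ (by omega) h
  have hbnorm : ∀ i, i < p - 1 → ‖((b i : ℕ) : ℚ_[p])‖ = 1 := by
    intro i hi
    have h1 : ((b i : ℕ) : ℚ_[p]) = (((b i : ℕ) : ℚ) : ℚ_[p]) := by push_cast; ring
    rw [h1, Padic.eq_padicNorm, (padicNorm.nat_eq_one_iff (b i)).2 (hndb i hi)]
    norm_num
  have hbne : ∀ i, i < p - 1 → ((b i : ℕ) : ℚ_[p]) ≠ 0 := by
    intro i hi h0
    have h2 := hbnorm i hi
    rw [h0] at h2
    simpa using h2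
  have hinv_norm : ∀ i, i < p - 1 → ‖(((b i : ℕ) : ℚ_[p]))⁻¹‖ ≤ 1 := by
    intro i hi
    rw [norm_inv, hbnorm i hi]
    norm_num
  set T : ℤ_[p] := ∑ i ∈ (Finset.range (p - 1)).attach,
    (⟨(((b i.1 : ℕ) : ℚ_[p]))⁻¹, hinv_norm i.1 (Finset.mem_range.1 i.2)⟩ : ℤ_[p]) with hTdef
  have hTcoe : (T : ℚ_[p]) = ((∑ i ∈ Finset.range (p - 1),
      (1 : ℚ) / ((a i) * (a (p - 2 - i)))) : ℚ) := by
    have h1 : (T : ℚ_[p]) = ∑ i ∈ (Finset.range (p - 1)).attach,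
        (((b i.1 : ℕ) : ℚ_[p]))⁻¹ := by
      rw [hTdef]
      exact map_sum (PadicInt.Coe.ringHom (p := p)) _ _
    rw [h1, Finset.sum_attach _ (fun i => (((b i : ℕ) : ℚ_[p]))⁻¹)]
    push_cast
    apply Finset.sum_congr rfl
    intro i hi
    rw [one_div]
    congr 1
    simp only [hbdef]
    push_cast
    ring
  -- toZMod T = 0
  have hcast_a : ∀ i : ℕ, ((a i : ℕ) : ZMod p) = (i : ZMod p) + 1 := by
    intro i
    simp only [hadef]
    push_cast
    rw [ZMod.natCast_self]
    ring
  have hcast_a2 : ∀ i, i < p - 1 → ((a (p - 2 - i) : ℕ) : ZMod p) = -((i : ZMod p) + 1) := by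
    intro i hi
    rw [hcast_a (p - 2 - i)]
    have e : ((p - 2 - i) + 1 + (i + 1) : ℕ) = p := by omega
    have e2 : (((p - 2 - i) + 1 + (i + 1) : ℕ) : ZMod p) = 0 := by rw [e, ZMod.natCast_self]
    push_cast at e2
    linear_combination e2
  have hT0 : PadicInt.toZMod T = 0 := by
    erw [hTdef, map_sum]
    have hterm : ∀ i : {x // x ∈ Finset.range (p - 1)},
        PadicInt.toZMod (⟨(((b i.1 : ℕ) : ℚ_[p]))⁻¹,
          hinv_norm i.1 (Finset.mem_range.1 i.2)⟩ : ℤ_[p])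
        = -((((i.1 : ℕ) : ZMod p) + 1)⁻¹) ^ 2 := by
      intro i
      obtain ⟨i, hmem⟩ := i
      have hi : i < p - 1 := Finset.mem_range.1 hmem
      set t : ℤ_[p] := (⟨(((b i : ℕ) : ℚ_[p]))⁻¹, hinv_norm i hi⟩ : ℤ_[p]) with htdef
      have hmul : t * ((b i : ℕ) : ℤ_[p]) = 1 := by
        apply Subtype.ext
        push_cast [htdef]
        exact inv_mul_cancel₀ (hbne i hi)
      have hmul2 : ((b i : ℕ) : ZMod p) * PadicInt.toZMod t = 1 := by
        have h := congrArg PadicInt.toZMod hmul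
        simp only [map_mul, map_one, map_natCast] at h
        linear_combination h
      have hbz : ((b i : ℕ) : ZMod p) = -(((i : ZMod p) + 1) ^ 2) := by
        simp only [hbdef]
        rw [Nat.cast_mul, hcast_a i, hcast_a2 i hi]
        ring
      have ht : PadicInt.toZMod t = (((b i : ℕ) : ZMod p))⁻¹ :=
        eq_inv_of_mul_eq_one_left (by linear_combination hmul2)
      rw [ht, hbz]
      rw [inv_neg, inv_pow]
    rw [Finset.sum_congr rfl (fun i _ => hterm i)]
    rw [Finset.sum_attach _ (fun i => -((((i : ℕ) : ZMod p) + 1)⁻¹) ^ 2)]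
    have hshift : ∀ i : ℕ, -((((i : ℕ) : ZMod p) + 1)⁻¹) ^ 2
        = -(((((i + 1 : ℕ)) : ZMod p))⁻¹) ^ 2 := by intro i; push_cast; ring
    rw [Finset.sum_congr rfl (fun i _ => hshift i)]
    have hp1 : p - 1 + 1 = p := by omega
    have hfull := Finset.sum_range_succ' (fun i : ℕ => -((((i : ℕ) : ZMod p))⁻¹) ^ 2) (p - 1)
    rw [hp1] at hfull
    have hzero : ∑ i ∈ Finset.range p, (-((((i : ℕ) : ZMod p))⁻¹) ^ 2) = 0 := by
      rw [sum_range_zmod (fun x : ZMod p => -(x⁻¹) ^ 2)]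
      rw [Finset.sum_neg_distrib, sum_inv_sq_zmod hp5, neg_zero]
    rw [hfull] at hzero
    simpa using hzero
  -- norm of T
  have hTnorm : ‖T‖ ≤ (p : ℝ) ^ (-(1 : ℕ) : ℤ) := by
    rw [PadicInt.norm_le_pow_iff_mem_span_pow, pow_one]
    rw [← PadicInt.maximalIdeal_eq_span_p, ← PadicInt.ker_toZMod, RingHom.mem_ker]
    exact hT0
  -- Step 4: assemble
  have hp1R : (1 : ℝ) < (p : ℝ) := by exact_mod_cast hp.one_lt
  have hpR0 : (p : ℝ) ≠ 0 := by positivity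
  have hnorm2 : ‖(2 : ℚ_[p])‖ = 1 := by
    rw [show (2 : ℚ_[p]) = (((2 : ℤ) : ℚ) : ℚ_[p]) by norm_cast, Padic.eq_padicNorm]
    rw [(padicNorm.int_eq_one_iff (p := p) 2).2 (by
      intro h
      have := Int.le_of_dvd (by norm_num) h
      omega)]
    norm_num
  have hkeyQp : (2 : ℚ_[p]) * ((S : ℚ) : ℚ_[p]) = ((p : ℕ) : ℚ_[p]) *
      (((2 * q + 1 : ℕ) : ℤ) : ℚ_[p]) * ((∑ i ∈ Finset.range (p - 1),
        (1 : ℚ) / ((a i) * (a (p - 2 - i)))) : ℚ) := by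
    exact_mod_cast congrArg (fun x : ℚ => (x : ℚ_[p])) key
  have hSnorm : ‖((S : ℚ) : ℚ_[p])‖ ≤ (p : ℝ) ^ (-2 : ℤ) := by
    have h1 : ‖((S : ℚ) : ℚ_[p])‖ = ‖(2 : ℚ_[p]) * ((S : ℚ) : ℚ_[p])‖ := by
      rw [norm_mul, hnorm2, one_mul]
    rw [h1, hkeyQp]
    rw [norm_mul, norm_mul]
    have hnp : ‖((p : ℕ) : ℚ_[p])‖ = (p : ℝ)⁻¹ := by
      exact_mod_cast Padic.norm_p (p := p)
    have hn21 : ‖(((2 * q + 1 : ℕ) : ℤ) : ℚ_[p])‖ ≤ 1 := Padic.norm_int_le_one _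
    have hnS' : ‖(((∑ i ∈ Finset.range (p - 1),
        (1 : ℚ) / ((a i) * (a (p - 2 - i)))) : ℚ) : ℚ_[p])‖ ≤ (p : ℝ)⁻¹ := by
      rw [← hTcoe, ← PadicInt.norm_def]
      calc ‖T‖ ≤ (p : ℝ) ^ (-(1 : ℕ) : ℤ) := hTnorm
      _ = (p : ℝ)⁻¹ := by
        rw [zpow_neg, zpow_natCast, pow_one]
    calc ‖((p : ℕ) : ℚ_[p])‖ * ‖(((2 * q + 1 : ℕ) : ℤ) : ℚ_[p])‖ * ‖_‖
        ≤ (p : ℝ)⁻¹ * 1 * (p : ℝ)⁻¹ := by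
          apply mul_le_mul
          · apply mul_le_mul
            · rw [hnp]
            · exact hn21
            · exact norm_nonneg _
            · positivity
          · exact hnS'
          · exact norm_nonneg _
          · positivity
    _ = (p : ℝ) ^ (-2 : ℤ) := by
        rw [show (-2 : ℤ) = -((2 : ℕ) : ℤ) by norm_num, zpow_neg, zpow_natCast, pow_two, mul_inv]
        ring
  -- conclude
  have hne : S ≠ 0 := ne_of_gt hSpos
  rw [hS]
  have hval : (padicNorm p S : ℝ) ≤ (p : ℝ) ^ (-2 : ℤ) := by
    rw [← Padic.eq_padicNorm]
    exact hSnorm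
  rw [padicNorm.eq_zpow_of_nonzero hne] at hval
  have hcast : ((((p : ℚ)) ^ (-padicValRat p S) : ℚ) : ℝ) = (p : ℝ) ^ (-padicValRat p S) := by
    push_cast
    ring
  rw [hcast] at hval
  have := (zpow_le_zpow_iff_right₀ hp1R).1 hval
  omega
end

section
/- For every prime p ≥ 5 and every positive integer J divisible by p, we have pH_J ≡ H_{J/p} modulo p³ℤ_p, i.e. v_p(pH_J − H_{J/p}) ≥ 3. -/
open Finset

section Aux

variable {p : ℕ}

private lemma aux_not_dvd (hp : p.Prime) (j i : ℕ) (hi : i < p - 1) : ¬ p ∣ (j * p + i + 1) := by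
  intro h
  have h1 : p ∣ j * p := ⟨j, Nat.mul_comm j p⟩
  have h2 : p ∣ (i + 1) := (Nat.dvd_add_right h1).mp (by rwa [add_assoc] at h)
  have := Nat.le_of_dvd (by omega) h2
  have := hp.two_le
  omega

private lemma aux_not_dvd0 (hp : p.Prime) (i : ℕ) (hi : i < p - 1) : ¬ p ∣ (i + 1) := by
  have := aux_not_dvd hp 0 i hi; simpa using this

private lemma aux_isUnit (hp : p.Prime) {m k : ℕ} (hk : ¬ p ∣ k) : IsUnit ((k : ZMod (p^m))) := by
  rw [ZMod.isUnit_iff_coprime]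
  exact Nat.Coprime.pow_right _ ((hp.coprime_iff_not_dvd.mpr hk).symm)

private lemma aux_castHom_inv (hp : p.Prime) (k : ℕ) (hk : ¬ p ∣ k) :
    ZMod.castHom (dvd_pow_self p two_ne_zero) (ZMod p) ((k : ZMod (p^2))⁻¹) = ((k : ZMod p))⁻¹ := by
  symm
  apply ZMod.inv_eq_of_mul_eq_one
  have h1 : (ZMod.castHom (dvd_pow_self p two_ne_zero) (ZMod p))
      ((k : ZMod (p^2)) * (k : ZMod (p^2))⁻¹) = 1 := by
    rw [ZMod.mul_inv_of_unit _ (aux_isUnit hp hk), map_one]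
  rwa [map_mul, map_natCast] at h1

private lemma aux_p_mul_eq_zero (hp : p.Prime) (x : ZMod (p^2))
    (h : ZMod.castHom (dvd_pow_self p two_ne_zero) (ZMod p) x = 0) :
    (p : ZMod (p^2)) * x = 0 := by
  haveI : NeZero p := ⟨hp.pos.ne'⟩
  haveI : NeZero (p^2) := ⟨pow_ne_zero 2 hp.pos.ne'⟩
  obtain ⟨k, rfl⟩ := ZMod.natCast_zmod_surjective x
  rw [map_natCast, ZMod.natCast_eq_zero_iff] at h
  obtain ⟨m, rfl⟩ := h
  rw [← Nat.cast_mul, ZMod.natCast_eq_zero_iff]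
  exact ⟨m, by ring⟩

private lemma aux_sum_inv_sq (hp : p.Prime) (hp5 : 5 ≤ p) :
    ∑ i ∈ range (p-1), (((i+1 : ℕ) : ZMod p))⁻¹ ^ 2 = 0 := by
  haveI : Fact p.Prime := ⟨hp⟩
  have key : ∑ x : ZMod p, x⁻¹ ^ 2 = 0 := by
    have h2 : ∑ x : ZMod p, x⁻¹ ^ 2 = ∑ x : ZMod p, x ^ 2 :=
      Equiv.sum_comp (Equiv.inv (ZMod p)) (fun x => x ^ 2)
    rw [h2]
    exact FiniteField.sum_pow_lt_card_sub_one (ZMod p) 2 (by rw [ZMod.card]; omega)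
  have h3 : ∑ i ∈ range p, (((i : ℕ) : ZMod p))⁻¹ ^ 2 = ∑ x : ZMod p, x⁻¹ ^ 2 := by
    apply Finset.sum_nbij' (fun i => ((i : ℕ) : ZMod p)) (fun x => x.val)
    · intro a ha; exact mem_univ _
    · intro a ha; exact mem_range.mpr (ZMod.val_lt a)
    · intro a ha; exact ZMod.val_cast_of_lt (mem_range.mp ha)
    · intro a ha; simp [ZMod.natCast_val, ZMod.cast_id]
    · intro a ha; rfl
  have h4 := Finset.sum_range_succ' (fun i => (((i : ℕ) : ZMod p))⁻¹ ^ 2) (p-1)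
  have e : p - 1 + 1 = p := by have := hp.two_le; omega
  rw [e] at h4
  rw [h3, key] at h4
  simpa using h4.symm

private lemma aux_W2 (hp : p.Prime) (hp5 : 5 ≤ p) :
    (p : ZMod (p^2)) * ∑ i ∈ range (p-1), (((i+1 : ℕ) : ZMod (p^2)))⁻¹ ^ 2 = 0 := by
  apply aux_p_mul_eq_zero hp
  rw [map_sum]
  have h1 : ∀ i ∈ range (p-1), (ZMod.castHom (dvd_pow_self p two_ne_zero) (ZMod p))
      ((((i+1 : ℕ) : ZMod (p^2)))⁻¹ ^ 2) = (((i+1 : ℕ) : ZMod p))⁻¹ ^ 2 := by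
    intro i hi
    rw [map_pow, aux_castHom_inv hp _ (aux_not_dvd0 hp i (mem_range.mp hi))]
  rw [Finset.sum_congr rfl h1]
  exact aux_sum_inv_sq hp hp5

private lemma aux_wolstenholme (hp : p.Prime) (hp5 : 5 ≤ p) :
    ∑ i ∈ range (p-1), (((i+1 : ℕ) : ZMod (p^2)))⁻¹ = 0 := by
  set S := ∑ i ∈ range (p-1), (((i+1 : ℕ) : ZMod (p^2)))⁻¹ with hS
  have hrev : ∑ i ∈ range (p-1), (((p - (i+1) : ℕ) : ZMod (p^2)))⁻¹ = S := by
    rw [hS]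
    apply Finset.sum_nbij' (fun i => p - 2 - i) (fun i => p - 2 - i)
    · intro a ha; exact mem_range.mpr (by have := mem_range.mp ha; omega)
    · intro a ha; exact mem_range.mpr (by have := mem_range.mp ha; omega)
    · intro a ha; have := mem_range.mp ha; omega
    · intro a ha; have := mem_range.mp ha; omega
    · intro a ha; have := mem_range.mp ha
      congr 2
      omega
  have h2S : (2 : ZMod (p^2)) * S = (p : ZMod (p^2)) *
      ∑ i ∈ range (p-1), ((((i+1 : ℕ)) : ZMod (p^2)))⁻¹ * (((p - (i+1) : ℕ) : ZMod (p^2)))⁻¹ := by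
    have hterm : ∀ i ∈ range (p-1),
        (((i+1 : ℕ) : ZMod (p^2)))⁻¹ + (((p - (i+1) : ℕ) : ZMod (p^2)))⁻¹
        = (p : ZMod (p^2)) * ((((i+1 : ℕ) : ZMod (p^2)))⁻¹ * (((p - (i+1) : ℕ) : ZMod (p^2)))⁻¹) := by
      intro i hi
      have hi' := mem_range.mp hi
      set A := ((i+1 : ℕ) : ZMod (p^2)) with hA
      set B := ((p - (i+1) : ℕ) : ZMod (p^2)) with hB
      have hAB : A + B = (p : ZMod (p^2)) := by
        rw [hA, hB, ← Nat.cast_add]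
        congr 1
        omega
      have hA1 : A * A⁻¹ = 1 := ZMod.mul_inv_of_unit _ (aux_isUnit hp (aux_not_dvd0 hp i hi'))
      have hB1 : B * B⁻¹ = 1 := by
        apply ZMod.mul_inv_of_unit
        apply aux_isUnit hp
        intro hdvd
        have h1 := Nat.le_of_dvd (by omega) hdvd
        omega
      rw [← hAB]
      linear_combination -(B⁻¹ * hA1) - A⁻¹ * hB1
    calc (2 : ZMod (p^2)) * S
        = (∑ i ∈ range (p-1), (((i+1 : ℕ) : ZMod (p^2)))⁻¹)
          + ∑ i ∈ range (p-1), (((p - (i+1) : ℕ) : ZMod (p^2)))⁻¹ := by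
          rw [two_mul, hrev, ← hS]
      _ = ∑ i ∈ range (p-1), ((((i+1 : ℕ) : ZMod (p^2)))⁻¹ + (((p - (i+1) : ℕ) : ZMod (p^2)))⁻¹) :=
          Finset.sum_add_distrib.symm
      _ = ∑ i ∈ range (p-1), (p : ZMod (p^2)) * ((((i+1 : ℕ) : ZMod (p^2)))⁻¹ * (((p - (i+1) : ℕ) : ZMod (p^2)))⁻¹) :=
          Finset.sum_congr rfl hterm
      _ = _ := (Finset.mul_sum _ _ _).symm
  have hz : (p : ZMod (p^2)) *
      ∑ i ∈ range (p-1), ((((i+1 : ℕ)) : ZMod (p^2)))⁻¹ * (((p - (i+1) : ℕ) : ZMod (p^2)))⁻¹ = 0 := by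
    apply aux_p_mul_eq_zero hp
    rw [map_sum]
    haveI : Fact p.Prime := ⟨hp⟩
    have hterm : ∀ i ∈ range (p-1),
        (ZMod.castHom (dvd_pow_self p two_ne_zero) (ZMod p))
          (((((i+1 : ℕ)) : ZMod (p^2)))⁻¹ * (((p - (i+1) : ℕ) : ZMod (p^2)))⁻¹)
        = -((((i+1 : ℕ) : ZMod p))⁻¹ ^ 2) := by
      intro i hi
      have hi' := mem_range.mp hi
      rw [map_mul, aux_castHom_inv hp _ (aux_not_dvd0 hp i hi'),
        aux_castHom_inv hp _ (by intro hdvd; have := Nat.le_of_dvd (by omega) hdvd; omega)]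
      have hcast : ((p - (i+1) : ℕ) : ZMod p) = -(((i+1 : ℕ)) : ZMod p) := by
        have h0 : ((p - (i+1) : ℕ) : ZMod p) + (((i+1 : ℕ)) : ZMod p) = 0 := by
          rw [← Nat.cast_add, show p - (i+1) + (i+1) = p by omega, ZMod.natCast_self]
        exact eq_neg_of_add_eq_zero_left h0
      rw [hcast, inv_neg]
      ring
    rw [Finset.sum_congr rfl hterm, Finset.sum_neg_distrib, aux_sum_inv_sq hp hp5, neg_zero]
  rw [hz] at h2S
  have h2 : IsUnit (2 : ZMod (p^2)) := by
    have hk : ¬ p ∣ 2 := fun h => by have := Nat.le_of_dvd two_pos h; omega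
    have := aux_isUnit (m := 2) hp hk
    simpa using this
  exact (h2.mul_right_eq_zero).mp h2S

private lemma aux_block (hp : p.Prime) (hp5 : 5 ≤ p) (j : ℕ) :
    ∑ i ∈ range (p-1), (((j*p + i + 1 : ℕ) : ZMod (p^2)))⁻¹ = 0 := by
  have hp2 : (p : ZMod (p^2)) * (p : ZMod (p^2)) = 0 := by
    rw [← Nat.cast_mul, ← pow_two, ZMod.natCast_self]
  have hterm : ∀ i ∈ range (p-1),
      (((j*p + i + 1 : ℕ) : ZMod (p^2)))⁻¹
      = (((i+1 : ℕ) : ZMod (p^2)))⁻¹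
        - (j : ZMod (p^2)) * ((p : ZMod (p^2)) * (((i+1 : ℕ) : ZMod (p^2)))⁻¹ ^ 2) := by
    intro i hi
    have hi' := mem_range.mp hi
    set x := ((i+1 : ℕ) : ZMod (p^2)) with hx
    have hx1 : x * x⁻¹ = 1 := ZMod.mul_inv_of_unit _ (aux_isUnit hp (aux_not_dvd0 hp i hi'))
    have hc : ((j*p + i + 1 : ℕ) : ZMod (p^2)) = (j : ZMod (p^2)) * (p : ZMod (p^2)) + x := by
      rw [hx]; push_cast; ring
    apply ZMod.inv_eq_of_mul_eq_one
    rw [hc]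
    linear_combination (1 - (j : ZMod (p^2)) * (p : ZMod (p^2)) * x⁻¹) * hx1
      - (j : ZMod (p^2))^2 * x⁻¹^2 * hp2
  rw [Finset.sum_congr rfl hterm, Finset.sum_sub_distrib, aux_wolstenholme hp hp5,
    ← Finset.mul_sum, ← Finset.mul_sum, aux_W2 hp hp5, mul_zero, zero_sub, neg_zero]

private lemma aux_harm (hp : p.Prime) (n : ℕ) :
    (p:ℚ) * H (p*n) = H n + (p:ℚ) * ∑ j ∈ range n, ∑ i ∈ range (p-1),
      (1:ℚ)/((j:ℚ)*(p:ℚ)+(i:ℚ)+1) := by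
  induction n with
  | zero => simp [H]
  | succ n ih =>
    have hp2 := hp.two_le
    have hps : p - 1 + 1 = p := by omega
    have hneq : ((n:ℚ)+1) ≠ 0 := by positivity
    have hpq : (p:ℚ) ≠ 0 := by positivity
    have hsplit : H (p*n + p) = H (p*n) + ∑ i ∈ range p, (1:ℚ)/((p:ℚ)*(n:ℚ) + (i:ℚ) + 1) := by
      unfold H
      rw [Finset.sum_range_add]
      refine congrArg _ (Finset.sum_congr rfl fun i _ => ?_)
      push_cast; ring_nf
    have hlast : ∑ i ∈ range p, (1:ℚ)/((p:ℚ)*(n:ℚ) + (i:ℚ) + 1)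
        = (∑ i ∈ range (p-1), (1:ℚ)/((p:ℚ)*(n:ℚ) + (i:ℚ) + 1))
          + (1:ℚ)/((p:ℚ)*(n:ℚ) + ((p-1:ℕ):ℚ) + 1) := by
      nth_rewrite 1 [← hps]
      rw [Finset.sum_range_succ]
    have h3 : (p:ℚ) * ((1:ℚ)/((p:ℚ)*(n:ℚ) + ((p-1:ℕ):ℚ) + 1)) = 1/((n:ℚ)+1) := by
      have hc : (p:ℚ)*(n:ℚ) + ((p-1:ℕ):ℚ) + 1 = (p:ℚ)*((n:ℚ)+1) := by
        rw [Nat.cast_sub (by omega : 1 ≤ p)]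
        push_cast; ring
      rw [hc, mul_one_div]
      rw [div_eq_div_iff (by positivity) hneq]
      ring
    have hH1 : H (n+1) = H n + 1/((n:ℚ)+1) := by
      unfold H; rw [Finset.sum_range_succ]
    have hblock : ∑ i ∈ range (p-1), (1:ℚ)/((p:ℚ)*(n:ℚ) + (i:ℚ) + 1)
        = ∑ i ∈ range (p-1), (1:ℚ)/((n:ℚ)*(p:ℚ)+(i:ℚ)+1) :=
      Finset.sum_congr rfl fun i _ => by ring_nf
    rw [Nat.mul_succ, hsplit, hlast, hH1, Finset.sum_range_succ]
    rw [hblock] at *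
    linear_combination ih + h3

end Aux

theorem p_mul_harmonic_congr_cube (p J : ℕ) (hp : p.Prime) (hp5 : 5 ≤ p)
    (hJ : 1 ≤ J) (hdvd : p ∣ J) :
    3 ≤ padicValRat p ((p : ℚ) * H J - H (J / p)) := by
  haveI : Fact p.Prime := ⟨hp⟩
  obtain ⟨n, rfl⟩ := hdvd
  have hp0 : 0 < p := hp.pos
  have hp2 : 2 ≤ p := hp.two_le
  have hn : 1 ≤ n := by by_contra h; push_neg at h; interval_cases n <;> omega
  rw [Nat.mul_div_cancel_left n hp0]
  set D : ℕ := ∏ j ∈ range n, ∏ i ∈ range (p-1), (j*p+i+1) with hD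
  set N : ℕ := ∑ j ∈ range n, ∑ i ∈ range (p-1), D / (j*p+i+1) with hN
  have hdvdD : ∀ j ∈ range n, ∀ i ∈ range (p-1), (j*p+i+1) ∣ D := by
    intro j hj i hi
    exact dvd_trans (Finset.dvd_prod_of_mem (fun i => j*p+i+1) hi)
      (Finset.dvd_prod_of_mem (fun j => ∏ i ∈ range (p-1), (j*p+i+1)) hj)
  have hD0 : 0 < D :=
    Finset.prod_pos fun j _ => Finset.prod_pos fun i _ => Nat.succ_pos _
  have hpD : ¬ p ∣ D := by
    intro h
    rw [hp.prime.dvd_finset_prod_iff] at h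
    obtain ⟨j, hj, h⟩ := h
    rw [hp.prime.dvd_finset_prod_iff] at h
    obtain ⟨i, hi, h⟩ := h
    exact aux_not_dvd hp j i (mem_range.mp hi) h
  have hNZ : (N : ZMod (p^2)) = 0 := by
    rw [hN]
    push_cast
    have hterm : ∀ j ∈ range n, ∑ i ∈ range (p-1), ((D/(j*p+i+1) : ℕ) : ZMod (p^2))
        = (D : ZMod (p^2)) * ∑ i ∈ range (p-1), (((j*p + i + 1 : ℕ) : ZMod (p^2)))⁻¹ := by
      intro j hj
      rw [Finset.mul_sum]
      refine Finset.sum_congr rfl fun i hi => ?_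
      have hu := aux_isUnit (m := 2) hp (aux_not_dvd hp j i (mem_range.mp hi))
      have h1 : ((D/(j*p+i+1) : ℕ) : ZMod (p^2)) * ((j*p+i+1 : ℕ) : ZMod (p^2))
          = (D : ZMod (p^2)) := by
        rw [← Nat.cast_mul, Nat.div_mul_cancel (hdvdD j hj i hi)]
      calc ((D/(j*p+i+1) : ℕ) : ZMod (p^2))
          = ((D/(j*p+i+1) : ℕ) : ZMod (p^2)) * (((j*p+i+1 : ℕ) : ZMod (p^2)) *
              (((j*p+i+1 : ℕ) : ZMod (p^2)))⁻¹) := by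
            rw [ZMod.mul_inv_of_unit _ hu, mul_one]
        _ = (D : ZMod (p^2)) * (((j*p+i+1 : ℕ) : ZMod (p^2)))⁻¹ := by
            rw [← mul_assoc, h1]
    rw [Finset.sum_congr rfl hterm]
    refine Finset.sum_eq_zero fun j _ => ?_
    rw [aux_block hp hp5 j, mul_zero]
  have hp2N : p^2 ∣ N := by
    haveI : NeZero (p^2) := ⟨pow_ne_zero 2 hp0.ne'⟩
    exact (ZMod.natCast_eq_zero_iff N (p^2)).mp hNZ
  have hN0 : N ≠ 0 := by
    have : 0 < N := by
      rw [hN]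
      refine Finset.sum_pos (fun j _ => Finset.sum_pos (fun i _ => ?_) ?_) ?_
      · exact Nat.div_pos (Nat.le_of_dvd hD0 (hdvdD j ‹_› i ‹_›)) (Nat.succ_pos _)
      · exact Finset.nonempty_range_iff.mpr (by omega)
      · exact Finset.nonempty_range_iff.mpr (by omega)
    omega
  have hDQ : (D:ℚ) ≠ 0 := by positivity
  have hND : (N:ℚ) = (∑ j ∈ range n, ∑ i ∈ range (p-1), (1:ℚ)/((j:ℚ)*(p:ℚ)+(i:ℚ)+1)) * D := by
    rw [hN, Finset.sum_mul]
    push_cast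
    refine Finset.sum_congr rfl fun j hj => ?_
    rw [Finset.sum_mul]
    refine Finset.sum_congr rfl fun i hi => ?_
    rw [Nat.cast_div (hdvdD j hj i hi) (by positivity)]
    push_cast
    field_simp
  have hx : (p:ℚ) * H (p*n) - H n = (p:ℚ) * ((N:ℚ)/(D:ℚ)) := by
    rw [aux_harm hp n]
    have hS : (N:ℚ)/D = ∑ j ∈ range n, ∑ i ∈ range (p-1), (1:ℚ)/((j:ℚ)*(p:ℚ)+(i:ℚ)+1) := by
      rw [hND, mul_div_assoc, div_self hDQ, mul_one]
    rw [hS]; ring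
  rw [hx]
  have hpQ : (p:ℚ) ≠ 0 := by positivity
  have hNQ : (N:ℚ) ≠ 0 := Nat.cast_ne_zero.mpr hN0
  rw [padicValRat.mul hpQ (div_ne_zero hNQ hDQ), padicValRat.div hNQ hDQ,
    padicValRat.self hp.one_lt, ← padicValRat_of_nat, ← padicValRat_of_nat,
    padicValNat.eq_zero_of_not_dvd hpD]
  have h2N : 2 ≤ padicValNat p N := (padicValNat_dvd_iff_le hN0).mp hp2N
  omega
end

section
/- For every positive integer J divisible by 3, we have 3H_J ≡ H_{J/3} modulo 9ℤ_3, i.e. v₃(3H_J − H_{J/3}) ≥ 2. -/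
private lemma term_pos (k : ℕ) :
    (0 : ℚ) < 9 * (2 * k + 1) / ((3 * k + 1) * (3 * k + 2)) := by positivity

private lemma key_sum (S : ℕ) :
    (3 : ℚ) * H (3 * S) - H S
      = ∑ k ∈ Finset.range S, (9 * (2 * k + 1) / ((3 * k + 1) * (3 * k + 2)) : ℚ) := by
  induction S with
  | zero => simp [H]
  | succ n ih =>
    have h3 : 3 * (n + 1) = (3 * n + 1) + 1 + 1 := by ring
    rw [Finset.sum_range_succ, ← ih]
    unfold H
    rw [h3, Finset.sum_range_succ, Finset.sum_range_succ, Finset.sum_range_succ,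
      Finset.sum_range_succ]
    push_cast
    have h1 : ((3:ℚ) * n + 1) ≠ 0 := by positivity
    have h2 : ((3:ℚ) * n + 1 + 1) ≠ 0 := by positivity
    have h4 : ((3:ℚ) * n + 1 + 1 + 1) ≠ 0 := by positivity
    have h5 : ((n:ℚ) + 1) ≠ 0 := by positivity
    have h6 : ((3:ℚ) * n + 2) ≠ 0 := by positivity
    field_simp
    ring

private lemma term_val (k : ℕ) :
    (2 : ℤ) ≤ padicValRat 3 (9 * (2 * k + 1) / ((3 * k + 1) * (3 * k + 2)) : ℚ) := by
  haveI : Fact (Nat.Prime 3) := ⟨by norm_num⟩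
  have h9 : ((9 : ℚ)) ≠ 0 := by norm_num
  have hnum : ((2 * k + 1 : ℕ) : ℚ) ≠ 0 := by positivity
  have hd1 : ((3 * k + 1 : ℕ) : ℚ) ≠ 0 := by positivity
  have hd2 : ((3 * k + 2 : ℕ) : ℚ) ≠ 0 := by positivity
  have hcast : (9 * (2 * k + 1) / ((3 * k + 1) * (3 * k + 2)) : ℚ)
      = (9 : ℚ) * ((2 * k + 1 : ℕ) : ℚ) / (((3 * k + 1 : ℕ) : ℚ) * ((3 * k + 2 : ℕ) : ℚ)) := by
    push_cast; ring
  rw [hcast, padicValRat.div (mul_ne_zero h9 hnum) (mul_ne_zero hd1 hd2),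
    padicValRat.mul h9 hnum, padicValRat.mul hd1 hd2]
  have v9 : padicValRat 3 (9 : ℚ) = 2 := by
    have : (9 : ℚ) = ((3 ^ 2 : ℕ) : ℚ) := by norm_num
    rw [this, padicValRat.of_nat, padicValNat.prime_pow]; norm_num
  have vnum : (0 : ℤ) ≤ padicValRat 3 ((2 * k + 1 : ℕ) : ℚ) :=
    zero_le_padicValRat_of_nat _
  have vd1 : padicValRat 3 ((3 * k + 1 : ℕ) : ℚ) = 0 := by
    rw [padicValRat.of_nat, padicValNat.eq_zero_of_not_dvd]
    · simp
    · omega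
  have vd2 : padicValRat 3 ((3 * k + 2 : ℕ) : ℚ) = 0 := by
    rw [padicValRat.of_nat, padicValNat.eq_zero_of_not_dvd]
    · simp
    · omega
  rw [v9, vd1, vd2]
  omega

private lemma val_sum_ge {F : ℕ → ℚ} {c : ℤ} (n : ℕ) (hn : 1 ≤ n)
    (hpos : ∀ k, 0 < F k) (hval : ∀ k, c ≤ padicValRat 3 (F k)) :
    c ≤ padicValRat 3 (∑ k ∈ Finset.range n, F k) := by
  haveI : Fact (Nat.Prime 3) := ⟨by norm_num⟩
  induction n with
  | zero => omega
  | succ m ih =>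
    rcases Nat.eq_or_lt_of_le hn with h | h
    · simp only [← h, Finset.sum_range_one]
      exact hval 0
    · have hm : 1 ≤ m := by omega
      have hsum_pos : 0 < ∑ k ∈ Finset.range m, F k :=
        Finset.sum_pos (fun i _ => hpos i) ⟨0, Finset.mem_range.mpr hm⟩
      rw [Finset.sum_range_succ]
      have hne : (∑ k ∈ Finset.range m, F k) + F m ≠ 0 := (add_pos hsum_pos (hpos m)).ne'
      calc c ≤ min (padicValRat 3 (∑ k ∈ Finset.range m, F k)) (padicValRat 3 (F m)) :=
              le_min (ih hm) (hval m)
        _ ≤ _ := padicValRat.min_le_padicValRat_add hne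

theorem three_mul_harmonic_congr (J : ℕ) (hJ : 1 ≤ J) (hdvd : 3 ∣ J) :
    2 ≤ padicValRat 3 ((3 : ℚ) * H J - H (J / 3)) := by
  obtain ⟨S, rfl⟩ := hdvd
  have hS : 1 ≤ S := by omega
  rw [Nat.mul_div_cancel_left S (by norm_num), key_sum]
  exact val_sum_ge S hS term_pos term_val
end

section
/- For every prime p ≥ 5 and every positive integer J divisible by p², we have pH_J ≡ H_{J/p} modulo p⁵ℤ_p, i.e. v_p(pH_J − H_{J/p}) ≥ 5. -/
namespace PH


/-- `Good p n q` means `v_p(q) ≥ n` witnessed algebraically. -/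
def Good (p n : ℕ) (q : ℚ) : Prop :=
  ∃ a b : ℤ, ¬ (p:ℤ) ∣ b ∧ q * (b:ℚ) = (p:ℚ) ^ n * (a:ℚ)

variable {p : ℕ}

lemma not_p_dvd_one (hp : p.Prime) : ¬ (p:ℤ) ∣ 1 := by
  intro h
  have h1 : (p:ℤ) = 1 := Int.eq_one_of_dvd_one (by positivity) h
  have h2 : p = 1 := by exact_mod_cast h1
  have := hp.two_le; omega

lemma good_zero (hp : p.Prime) (n : ℕ) : Good p n 0 :=
  ⟨0, 1, not_p_dvd_one hp, by simp⟩

lemma good_add (hp : p.Prime) {n : ℕ} {q r : ℚ} (hq : Good p n q) (hr : Good p n r) :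
    Good p n (q + r) := by
  obtain ⟨a₁, b₁, h₁, e₁⟩ := hq
  obtain ⟨a₂, b₂, h₂, e₂⟩ := hr
  refine ⟨a₁ * b₂ + a₂ * b₁, b₁ * b₂, ?_, ?_⟩
  · intro h
    rcases (Nat.prime_iff_prime_int.1 hp).dvd_mul.mp h with h | h
    exacts [h₁ h, h₂ h]
  · push_cast
    linear_combination (b₂ : ℚ) * e₁ + (b₁ : ℚ) * e₂

lemma good_neg (hp : p.Prime) {n : ℕ} {q : ℚ} (hq : Good p n q) : Good p n (-q) := by
  obtain ⟨a, b, h, e⟩ := hq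
  exact ⟨-a, b, h, by push_cast; linear_combination -e⟩

lemma good_sub (hp : p.Prime) {n : ℕ} {q r : ℚ} (hq : Good p n q) (hr : Good p n r) :
    Good p n (q - r) := by
  have := good_add hp hq (good_neg hp hr); simpa [sub_eq_add_neg] using this

lemma good_mul (hp : p.Prime) {n k : ℕ} {q r : ℚ} (hq : Good p n q) (hr : Good p k r) :
    Good p (n + k) (q * r) := by
  obtain ⟨a₁, b₁, h₁, e₁⟩ := hq
  obtain ⟨a₂, b₂, h₂, e₂⟩ := hr
  refine ⟨a₁ * a₂, b₁ * b₂, ?_, ?_⟩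
  · intro h
    rcases (Nat.prime_iff_prime_int.1 hp).dvd_mul.mp h with h | h
    exacts [h₁ h, h₂ h]
  · push_cast
    rw [pow_add]
    linear_combination (r * (b₂:ℚ)) * e₁ + ((p:ℚ)^n * (a₁:ℚ)) * e₂

lemma good_exp_eq {n m : ℕ} {q : ℚ} (h : m = n) (hq : Good p n q) : Good p m q := h ▸ hq

lemma good_sum (hp : p.Prime) {n : ℕ} {ι : Type*} {s : Finset ι} {f : ι → ℚ}
    (h : ∀ i ∈ s, Good p n (f i)) : Good p n (∑ i ∈ s, f i) :=
  Finset.sum_induction f (Good p n) (fun _ _ ha hb => good_add hp ha hb) (good_zero hp n) h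

lemma good_intCast (hp : p.Prime) {n : ℕ} {a : ℤ} (h : (p:ℤ) ^ n ∣ a) : Good p n (a : ℚ) := by
  obtain ⟨c, rfl⟩ := h
  exact ⟨c, 1, not_p_dvd_one hp, by push_cast; ring⟩

lemma good_natCast (hp : p.Prime) {n : ℕ} {a : ℕ} (h : p ^ n ∣ a) : Good p n (a : ℚ) := by
  have : (p:ℤ) ^ n ∣ (a:ℤ) := by exact_mod_cast Int.natCast_dvd_natCast.mpr h
  simpa using good_intCast hp this

lemma good_p (hp : p.Prime) : Good p 1 (p : ℚ) := by
  simpa using good_natCast hp (n := 1) (a := p) (by simp)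

lemma good_one_div (hp : p.Prime) {k : ℕ} (hk : ¬ p ∣ k) : Good p 0 (1 / (k : ℚ)) := by
  have hk0 : k ≠ 0 := by rintro rfl; exact hk (dvd_zero p)
  have hkq : (k:ℚ) ≠ 0 := by exact_mod_cast hk0
  refine ⟨1, (k:ℤ), ?_, ?_⟩
  · intro h; exact hk (by exact_mod_cast h)
  · push_cast; field_simp

lemma good_mono (hp : p.Prime) {n k : ℕ} {q : ℚ} (h : k ≤ n) (hq : Good p n q) :
    Good p k q := by
  obtain ⟨a, b, hb, e⟩ := hq
  refine ⟨(p:ℤ) ^ (n - k) * a, b, hb, ?_⟩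
  have hnk : (p:ℚ) ^ n = (p:ℚ) ^ k * (p:ℚ) ^ (n - k) := by
    rw [← pow_add]; congr 1; omega
  rw [e, hnk]
  push_cast
  ring

lemma good_val (hp : p.Prime) {n : ℕ} {q : ℚ} (hq : q ≠ 0) (h : Good p n q) :
    (n : ℤ) ≤ padicValRat p q := by
  haveI : Fact p.Prime := ⟨hp⟩
  obtain ⟨a, b, hb, e⟩ := h
  have hb0 : b ≠ 0 := by rintro rfl; exact hb (dvd_zero _)
  have hbq : (b:ℚ) ≠ 0 := Int.cast_ne_zero.mpr hb0
  have ha0 : (a:ℚ) ≠ 0 := by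
    intro h0
    rw [h0, mul_zero] at e
    exact (mul_ne_zero hq hbq) e
  have hpq : (p:ℚ) ≠ 0 := by exact_mod_cast hp.pos.ne'
  have e1 : padicValRat p (q * b) = padicValRat p q + padicValRat p b :=
    padicValRat.mul hq hbq
  have e2 : padicValRat p ((p:ℚ)^n * a) = padicValRat p ((p:ℚ)^n) + padicValRat p a :=
    padicValRat.mul (pow_ne_zero _ hpq) ha0
  have e3 : padicValRat p ((p:ℚ)^n) = n := by
    rw [padicValRat.pow (p:ℚ), padicValRat.self hp.one_lt]; ring
  have e4 : padicValRat p (b:ℚ) = 0 := by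
    rw [padicValRat.of_int, padicValInt.eq_zero_of_not_dvd hb]; rfl
  have e5 : (0:ℤ) ≤ padicValRat p (a:ℚ) := by
    rw [padicValRat.of_int]; positivity
  rw [e] at e1
  rw [e2, e3, e4] at e1
  omega



/-- The mod-`p²` inverse of `a`. -/
def ginv (p a : ℕ) : ℕ := (((a : ZMod (p^2)))⁻¹).val

lemma good_inv_sq (hp : p.Prime) {a : ℕ} (ha : ¬ p ∣ a) :
    Good p 2 (1/(a:ℚ) * (1/(a:ℚ)) - ((ginv p a : ℚ))^2) := by
  haveI : NeZero (p^2) := ⟨pow_ne_zero 2 hp.pos.ne'⟩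
  have hcop : Nat.Coprime a (p^2) :=
    ((Nat.coprime_comm).mp (hp.coprime_iff_not_dvd.mpr ha)).pow_right 2
  have hu : IsUnit ((a : ZMod (p^2))) := (ZMod.isUnit_iff_coprime a (p^2)).mpr hcop
  have h1 : ((a * ginv p a : ℕ) : ZMod (p^2)) = ((1:ℕ) : ZMod (p^2)) := by
    push_cast
    rw [ginv, ZMod.natCast_val, ZMod.cast_id]
    exact ZMod.mul_inv_of_unit _ hu
  have h2 : a * ginv p a ≡ 1 [MOD p^2] := (ZMod.natCast_eq_natCast_iff _ _ _).mp h1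
  have h3 : ((p:ℤ))^2 ∣ 1 - (a:ℤ) * (ginv p a : ℤ) := by
    have h4 := Nat.ModEq.dvd h2
    push_cast at h4
    convert h4 using 2 <;> push_cast <;> ring
  obtain ⟨c, hc⟩ := h3
  have ha0 : a ≠ 0 := by rintro rfl; exact ha (dvd_zero p)
  have haq : (a:ℚ) ≠ 0 := by exact_mod_cast ha0
  refine ⟨c * ((a : ℤ) * ginv p a + 1), (a:ℤ) * (a:ℤ), ?_, ?_⟩
  · intro h
    rcases (Nat.prime_iff_prime_int.1 hp).dvd_mul.mp h with h | h <;>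
      exact ha (by exact_mod_cast h)
  · have hcq : (1:ℚ) - (a:ℚ) * (ginv p a : ℚ) = (p:ℚ)^2 * (c:ℚ) := by
      exact_mod_cast congrArg (Int.cast : ℤ → ℚ) hc
    push_cast
    field_simp
    linear_combination ((1:ℚ) + (a:ℚ) * (ginv p a : ℚ)) * hcq


variable {p : ℕ}

lemma zmod_inv_eq {n : ℕ} {a b : ZMod n} (ha : IsUnit a) (h : a * b = 1) : a⁻¹ = b := by
  calc a⁻¹ = a⁻¹ * (a * b) := by rw [h, mul_one]
  _ = (a⁻¹ * a) * b := by ring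
  _ = b := by rw [ZMod.inv_mul_of_unit a ha, one_mul]

lemma isUnit_inv {n : ℕ} {a : ZMod n} (ha : IsUnit a) : IsUnit a⁻¹ :=
  IsUnit.of_mul_eq_one _ (ZMod.inv_mul_of_unit a ha)

lemma inv_inv_of_unit {n : ℕ} {a : ZMod n} (ha : IsUnit a) : a⁻¹⁻¹ = a :=
  zmod_inv_eq (isUnit_inv ha) (ZMod.inv_mul_of_unit a ha)

/-- Sum of squares of units of `ZMod n` is zero when 2 and 3 are units. -/
lemma sum_units_sq {n : ℕ} [NeZero n] (h2 : IsUnit (2 : ZMod n)) (h3 : IsUnit (3 : ZMod n)) :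
    ∑ x ∈ Finset.univ.filter (fun x : ZMod n => IsUnit x), x^2 = 0 := by
  set s := Finset.univ.filter (fun x : ZMod n => IsUnit x) with hs
  have key : ∑ x ∈ s, x^2 = ∑ x ∈ s, (2*x)^2 := by
    refine Finset.sum_nbij' (fun x => (2:ZMod n)⁻¹ * x) (fun y => 2 * y) ?_ ?_ ?_ ?_ ?_
    · intro a ha
      simp only [hs, Finset.mem_filter, Finset.mem_univ, true_and] at ha ⊢
      exact (isUnit_inv h2).mul ha
    · intro a ha
      simp only [hs, Finset.mem_filter, Finset.mem_univ, true_and] at ha ⊢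
      exact h2.mul ha
    · intro a _
      show (2:ZMod n) * ((2:ZMod n)⁻¹ * a) = a
      rw [← mul_assoc, ZMod.mul_inv_of_unit 2 h2, one_mul]
    · intro a _
      show (2:ZMod n)⁻¹ * ((2:ZMod n) * a) = a
      rw [← mul_assoc, ZMod.inv_mul_of_unit 2 h2, one_mul]
    · intro a _
      show a^2 = (2 * ((2:ZMod n)⁻¹ * a))^2
      rw [← mul_assoc, ZMod.mul_inv_of_unit 2 h2, one_mul]
  have key2 : ∑ x ∈ s, (2*x)^2 = 4 * ∑ x ∈ s, x^2 := by
    rw [Finset.mul_sum]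
    apply Finset.sum_congr rfl
    intro x _; ring
  have h30 : (3 : ZMod n) * ∑ x ∈ s, x^2 = 0 := by
    have h4 : (4:ZMod n) * ∑ x ∈ s, x^2 - ∑ x ∈ s, x^2 = 0 := by
      rw [← key2, ← key]; ring
    calc (3 : ZMod n) * ∑ x ∈ s, x^2
        = (4:ZMod n) * ∑ x ∈ s, x^2 - ∑ x ∈ s, x^2 := by ring
    _ = 0 := h4
  calc ∑ x ∈ s, x^2 = (3:ZMod n)⁻¹ * (3 * ∑ x ∈ s, x^2) := by
        rw [← mul_assoc, ZMod.inv_mul_of_unit 3 h3, one_mul]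
  _ = 0 := by rw [h30, mul_zero]

/-- The inner sum over one period vanishes. -/
lemma sum_one_period (hp : p.Prime) (hp5 : 5 ≤ p) [NeZero (p^2)] :
    ∑ i ∈ (Finset.range (p^2)).filter (fun i => ¬ p ∣ (i+1)),
      (((i+1 : ℕ) : ZMod (p^2))⁻¹)^2 = 0 := by
  haveI : Fact (1 < p^2) := ⟨by nlinarith [hp.two_le]⟩
  set s := Finset.univ.filter (fun x : ZMod (p^2) => IsUnit x) with hs
  have hstep1 : ∑ i ∈ (Finset.range (p^2)).filter (fun i => ¬ p ∣ (i+1)),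
      (((i+1 : ℕ) : ZMod (p^2))⁻¹)^2 = ∑ x ∈ s, (x⁻¹)^2 := by
    refine Finset.sum_nbij' (fun i => ((i+1 : ℕ) : ZMod (p^2)))
      (fun x => x.val - 1) ?_ ?_ ?_ ?_ ?_
    · intro i hi
      simp only [Finset.mem_filter, Finset.mem_range] at hi
      simp only [hs, Finset.mem_filter, Finset.mem_univ, true_and]
      rw [ZMod.isUnit_iff_coprime]
      exact ((Nat.coprime_comm).mp (hp.coprime_iff_not_dvd.mpr hi.2)).pow_right 2
    · intro x hx
      simp only [hs, Finset.mem_filter, Finset.mem_univ, true_and] at hx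
      have hx0 : x ≠ 0 := by
        rintro rfl; exact (not_isUnit_zero : ¬ IsUnit (0 : ZMod (p^2))) hx
      have hval : x.val ≠ 0 := fun h => hx0 ((ZMod.val_eq_zero x).mp h)
      have hvlt : x.val < p^2 := ZMod.val_lt x
      have hnd : ¬ p ∣ x.val := by
        intro hdvd
        have hcast : ((x.val : ℕ) : ZMod (p^2)) = x := by
          rw [ZMod.natCast_val, ZMod.cast_id]
        have hx' : IsUnit ((x.val : ℕ) : ZMod (p^2)) := by rw [hcast]; exact hx
        have hcop : Nat.Coprime x.val (p^2) := (ZMod.isUnit_iff_coprime _ _).mp hx'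
        have hg : p ∣ Nat.gcd x.val (p^2) := Nat.dvd_gcd hdvd (dvd_pow_self p two_ne_zero)
        rw [hcop] at hg
        have := Nat.le_of_dvd one_pos hg
        have := hp.two_le; omega
      simp only [Finset.mem_filter, Finset.mem_range]
      refine ⟨by omega, ?_⟩
      have h1 : x.val - 1 + 1 = x.val := by omega
      rw [h1]; exact hnd
    · intro i hi
      simp only [Finset.mem_filter, Finset.mem_range] at hi
      have hlt : i + 1 < p^2 := by
        rcases Nat.lt_or_ge (i+1) (p^2) with h | h
        · exact h
        · exfalso
          have he : i + 1 = p^2 := by omega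
          exact hi.2 (he ▸ dvd_pow_self p two_ne_zero)
      show (((i+1 : ℕ) : ZMod (p^2))).val - 1 = i
      rw [ZMod.val_cast_of_lt hlt]
      omega
    · intro x hx
      simp only [hs, Finset.mem_filter, Finset.mem_univ, true_and] at hx
      have hx0 : x ≠ 0 := by
        rintro rfl; exact (not_isUnit_zero : ¬ IsUnit (0 : ZMod (p^2))) hx
      have hval : x.val ≠ 0 := fun h => hx0 ((ZMod.val_eq_zero x).mp h)
      show ((x.val - 1 + 1 : ℕ) : ZMod (p^2)) = x
      have h1 : x.val - 1 + 1 = x.val := by omega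
      rw [h1, ZMod.natCast_val, ZMod.cast_id]
    · intro i _; rfl
  rw [hstep1]
  have hcopnat : ∀ k : ℕ, ¬ p ∣ k → Nat.Coprime k (p^2) := fun k hk =>
    ((Nat.coprime_comm).mp (hp.coprime_iff_not_dvd.mpr hk)).pow_right 2
  have h2 : IsUnit (2 : ZMod (p^2)) := by
    have := (ZMod.isUnit_iff_coprime 2 (p^2)).mpr
      (hcopnat 2 (fun h => by have := Nat.le_of_dvd (by norm_num) h; omega))
    simpa using this
  have h3 : IsUnit (3 : ZMod (p^2)) := by
    have := (ZMod.isUnit_iff_coprime 3 (p^2)).mpr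
      (hcopnat 3 (fun h => by have := Nat.le_of_dvd (by norm_num) h; omega))
    simpa using this
  have hstep2 : ∑ x ∈ s, (x⁻¹)^2 = ∑ x ∈ s, x^2 := by
    refine Finset.sum_nbij' (fun x => x⁻¹) (fun x => x⁻¹) ?_ ?_ ?_ ?_ ?_
    · intro a ha
      simp only [hs, Finset.mem_filter, Finset.mem_univ, true_and] at ha ⊢
      exact isUnit_inv ha
    · intro a ha
      simp only [hs, Finset.mem_filter, Finset.mem_univ, true_and] at ha ⊢
      exact isUnit_inv ha
    · intro a ha
      simp only [hs, Finset.mem_filter, Finset.mem_univ, true_and] at ha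
      exact inv_inv_of_unit ha
    · intro a ha
      simp only [hs, Finset.mem_filter, Finset.mem_univ, true_and] at ha
      exact inv_inv_of_unit ha
    · intro a _; rfl
  rw [hstep2, hs]
  exact sum_units_sq h2 h3



lemma sum_range_mul_periodic {M : Type*} [AddCommMonoid M] (f : ℕ → M) (n m : ℕ)
    (hf : ∀ i, f (i + n) = f i) :
    ∑ i ∈ Finset.range (n * m), f i = m • ∑ i ∈ Finset.range n, f i := by
  have hshift : ∀ k i, f (i + n * k) = f i := by
    intro k
    induction k with
    | zero => simp
    | succ k ih =>
      intro i
      have : i + n * (k+1) = (i + n * k) + n := by ring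
      rw [this, hf, ih]
  induction m with
  | zero => simp
  | succ m ih =>
    have h1 : n * (m+1) = n * m + n := by ring
    have h3 : ∑ i ∈ Finset.Ico (n*m) (n*m+n), f i = ∑ i ∈ Finset.range n, f i := by
      rw [Finset.sum_Ico_eq_sum_range]
      have hsub : n * m + n - n * m = n := by omega
      rw [hsub]
      apply Finset.sum_congr rfl
      intro i _
      rw [add_comm, hshift m i]
    rw [h1, Finset.range_eq_Ico, ← Finset.sum_Ico_consecutive f (Nat.zero_le (n*m))
      (Nat.le_add_right (n*m) n), h3, ← Finset.range_eq_Ico, ih, succ_nsmul]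

/-- `p^2` divides `Z`. -/
lemma p_sq_dvd_Z {p : ℕ} (hp : p.Prime) (hp5 : 5 ≤ p) (m : ℕ) :
    p^2 ∣ ∑ i ∈ (Finset.range (p^2 * m)).filter (fun i => ¬ p ∣ (i+1)),
      ((ginv p (i+1))^2) := by
  show p^2 ∣ ∑ i ∈ (Finset.range (p^2 * m)).filter (fun i => ¬ p ∣ (i+1)),
      (((((i+1 : ℕ) : ZMod (p^2))⁻¹).val)^2)
  haveI : NeZero (p^2) := ⟨by positivity⟩
  rw [← ZMod.natCast_eq_zero_iff]
  have hval : ∀ i : ℕ, ((((((i+1 : ℕ) : ZMod (p^2))⁻¹).val : ℕ)) : ZMod (p^2))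
      = (((i+1 : ℕ) : ZMod (p^2)))⁻¹ := by
    intro i; rw [ZMod.natCast_val, ZMod.cast_id]
  have hcongr : ∑ i ∈ (Finset.range (p^2 * m)).filter (fun i => ¬ p ∣ (i+1)),
      ((((((((i+1 : ℕ) : ZMod (p^2))⁻¹).val)^2 : ℕ)) : ZMod (p^2)))
      = ∑ i ∈ (Finset.range (p^2 * m)).filter (fun i => ¬ p ∣ (i+1)),
      ((((i+1 : ℕ) : ZMod (p^2)))⁻¹)^2 := by
    apply Finset.sum_congr rfl
    intro i _; rw [Nat.cast_pow, hval]
  rw [Nat.cast_sum, hcongr]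
  -- turn filtered sum into full range sum of an if-function
  classical
  set g : ℕ → ZMod (p^2) := fun i => if ¬ p ∣ (i+1) then ((((i+1 : ℕ) : ZMod (p^2)))⁻¹)^2 else 0
    with hg
  have hfilter : ∀ N : ℕ, ∑ i ∈ (Finset.range N).filter (fun i => ¬ p ∣ (i+1)),
      ((((i+1 : ℕ) : ZMod (p^2)))⁻¹)^2 = ∑ i ∈ Finset.range N, g i := by
    intro N
    rw [Finset.sum_filter]
  rw [hfilter]
  have hper : ∀ i, g (i + p^2) = g i := by
    intro i
    have hdvd : p ∣ (i + p^2 + 1) ↔ p ∣ (i+1) := by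
      have hpp : p ∣ p^2 := dvd_pow_self p two_ne_zero
      have hre : i + p^2 + 1 = (i + 1) + p^2 := by ring
      constructor
      · intro h
        rw [hre] at h
        have h2 := Nat.dvd_sub h hpp
        simpa using h2
      · intro h
        rw [hre]
        exact Nat.dvd_add h hpp
    have hcast : ((i + p^2 + 1 : ℕ) : ZMod (p^2)) = ((i + 1 : ℕ) : ZMod (p^2)) := by
      push_cast
      have h0 : ((p : ZMod (p^2)))^2 = 0 := by
        rw [← Nat.cast_pow]; exact ZMod.natCast_self _
      rw [h0]
      ring
    simp only [hg, hdvd, hcast]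
  rw [sum_range_mul_periodic g (p^2) m hper, ← hfilter, sum_one_period hp hp5, smul_zero]


end PH

theorem p_mul_harmonic_congr_fifth (p J : ℕ) (hp : p.Prime) (hp5 : 5 ≤ p)
    (hJ : 1 ≤ J) (hdvd : p ^ 2 ∣ J) :
    5 ≤ padicValRat p ((p : ℚ) * H J - H (J / p)) := by
  classical
  obtain ⟨m, hm⟩ := hdvd
  have hdvd : p ^ 2 ∣ J := ⟨m, hm⟩
  have hpd : p ∣ J := (dvd_pow_self p two_ne_zero).trans hdvd
  have hppos := hp.pos
  have hpq : (p:ℚ) ≠ 0 := by exact_mod_cast hp.pos.ne'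
  set F := (Finset.range J).filter (fun i => ¬ p ∣ (i+1)) with hF
  set S := ∑ i ∈ F, (1:ℚ)/(i+1) with hS
  set t := J / p with ht
  have hJt : p * t = J := Nat.mul_div_cancel' hpd
  -- Step A : p * H J - H t = p * S
  have hsplit : H J = (∑ i ∈ (Finset.range J).filter (fun i => p ∣ (i+1)), (1:ℚ)/(i+1)) + S := by
    rw [hS, hF, H]
    exact (Finset.sum_filter_add_sum_filter_not _ _ _).symm
  have hM : (∑ k ∈ Finset.range t, (1:ℚ)/((p:ℚ)*((k:ℚ)+1)))
      = ∑ i ∈ (Finset.range J).filter (fun i => p ∣ (i+1)), (1:ℚ)/(i+1) := by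
    refine Finset.sum_nbij' (fun k => p*k + p - 1) (fun i => (i+1)/p - 1) ?_ ?_ ?_ ?_ ?_
    · intro k hk
      rw [Finset.mem_range] at hk
      have hmul : p*(k+1) ≤ p*t := Nat.mul_le_mul_left p (by omega)
      rw [hJt] at hmul
      have hmd : p*(k+1) = p*k+p := by ring
      rw [Finset.mem_filter, Finset.mem_range]
      constructor
      · show p*k+p-1 < J
        omega
      · show p ∣ (p*k+p-1)+1
        have hpk : (p*k+p-1)+1 = p*(k+1) := by omega
        rw [hpk]
        exact dvd_mul_right p (k+1)
    · intro i hi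
      rw [Finset.mem_filter, Finset.mem_range] at hi
      obtain ⟨h1, s, hs⟩ := hi
      have hs0 : s ≠ 0 := by rintro rfl; rw [Nat.mul_zero] at hs; omega
      obtain ⟨s', rfl⟩ : ∃ s', s = s' + 1 := ⟨s - 1, by omega⟩
      have hs' : i + 1 = p*s' + p := by rw [hs]; ring
      have h2 : p*(s'+1) ≤ p*t := by
        rw [hJt]
        omega
      have hst : s'+1 ≤ t := Nat.le_of_mul_le_mul_left h2 hppos
      have hdiv : (i+1)/p = s' + 1 := by rw [hs]; exact Nat.mul_div_cancel_left _ hppos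
      rw [Finset.mem_range]
      show (i+1)/p - 1 < t
      omega
    · intro k hk
      rw [Finset.mem_range] at hk
      show ((p*k+p-1) + 1)/p - 1 = k
      have hmd : p*(k+1) = p*k+p := by ring
      have hpk : (p*k+p-1) + 1 = p*(k+1) := by omega
      rw [hpk, Nat.mul_div_cancel_left _ hppos]
      omega
    · intro i hi
      rw [Finset.mem_filter, Finset.mem_range] at hi
      obtain ⟨h1, s, hs⟩ := hi
      have hs0 : s ≠ 0 := by rintro rfl; rw [Nat.mul_zero] at hs; omega
      obtain ⟨s', rfl⟩ : ∃ s', s = s' + 1 := ⟨s - 1, by omega⟩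
      have hs' : i + 1 = p*s' + p := by rw [hs]; ring
      have hdiv : (i+1)/p = s' + 1 := by rw [hs]; exact Nat.mul_div_cancel_left _ hppos
      show p * ((i+1)/p - 1) + p - 1 = i
      rw [hdiv]
      simp only [Nat.add_sub_cancel]
      omega
    · intro k hk
      have hmd : p*(k+1) = p*k+p := by ring
      have hpk : (p*k+p-1) + 1 = p*(k+1) := by omega
      have h2 : ((p*k+p-1 : ℕ) : ℚ) + 1 = ((p*(k+1) : ℕ) : ℚ) := by exact_mod_cast hpk
      show (1:ℚ)/((p:ℚ)*((k:ℚ)+1)) = 1/(((p*k+p-1 : ℕ):ℚ)+1)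
      rw [h2]
      push_cast
      ring_nf
  have hMH : ∑ k ∈ Finset.range t, (1:ℚ)/((p:ℚ)*((k:ℚ)+1)) = (1/(p:ℚ)) * H t := by
    rw [H, Finset.mul_sum]
    apply Finset.sum_congr rfl
    intro k _
    rw [div_mul_div_comm]
    norm_num
  have hA : (p:ℚ) * H J - H t = (p:ℚ) * S := by
    rw [hsplit, ← hM, hMH]
    field_simp
    ring
  -- facts about members of F
  have hFfact : ∀ i ∈ F, i + 2 ≤ J ∧ ¬ p ∣ (i+1) ∧ ¬ p ∣ (J-1-i) ∧ (i+1) + (J-1-i) = J := by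
    intro i hi
    rw [hF, Finset.mem_filter, Finset.mem_range] at hi
    obtain ⟨h1, h2⟩ := hi
    have hiJ : i + 1 ≠ J := fun h => h2 (h ▸ hpd)
    have hle : i + 2 ≤ J := by omega
    refine ⟨hle, h2, ?_, by omega⟩
    intro h
    have h5 := Nat.dvd_sub hpd h
    have heq : J - (J - 1 - i) = i + 1 := by omega
    rw [heq] at h5
    exact h2 h5
  have hQfact : ∀ i ∈ F, ((i:ℚ)+1) ≠ 0 ∧ ((J-1-i : ℕ):ℚ) ≠ 0 ∧
      ((i:ℚ)+1) + ((J-1-i : ℕ):ℚ) = (J:ℚ) := by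
    intro i hi
    obtain ⟨h1, h2, h3, h4⟩ := hFfact i hi
    refine ⟨by positivity, ?_, ?_⟩
    · have : 1 ≤ J - 1 - i := by omega
      have : (1:ℚ) ≤ ((J-1-i : ℕ):ℚ) := by exact_mod_cast this
      linarith
    · exact_mod_cast h4
  -- Step B
  have hS2 : S = ∑ i ∈ F, (1:ℚ)/((J-1-i : ℕ):ℚ) := by
    rw [hS]
    refine Finset.sum_nbij' (fun i => J-2-i) (fun i => J-2-i) ?_ ?_ ?_ ?_ ?_
    · intro i hi
      obtain ⟨h1, h2, h3, h4⟩ := hFfact i hi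
      rw [hF, Finset.mem_filter, Finset.mem_range]
      refine ⟨?_, ?_⟩
      · show J-2-i < J
        omega
      · show ¬ p ∣ (J-2-i)+1
        have he : J-2-i+1 = J-1-i := by omega
        rw [he]; exact h3
    · intro i hi
      obtain ⟨h1, h2, h3, h4⟩ := hFfact i hi
      rw [hF, Finset.mem_filter, Finset.mem_range]
      refine ⟨?_, ?_⟩
      · show J-2-i < J
        omega
      · show ¬ p ∣ (J-2-i)+1
        have he : J-2-i+1 = J-1-i := by omega
        rw [he]; exact h3
    · intro i hi
      obtain ⟨h1, h2, h3, h4⟩ := hFfact i hi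
      show J-2-(J-2-i) = i
      omega
    · intro i hi
      obtain ⟨h1, h2, h3, h4⟩ := hFfact i hi
      show J-2-(J-2-i) = i
      omega
    · intro i hi
      obtain ⟨h1, h2, h3, h4⟩ := hFfact i hi
      show (1:ℚ)/((i:ℚ)+1) = 1/(((J-1-(J-2-i) : ℕ)):ℚ)
      have he : J-1-(J-2-i) = i+1 := by omega
      rw [he]
      push_cast
      ring_nf
  set T := ∑ i ∈ F, (1:ℚ)/(((i:ℚ)+1) * ((J-1-i : ℕ):ℚ)) with hT
  have h2S : S + S = (J:ℚ) * T := by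
    have e1 : S + S = ∑ i ∈ F, ((1:ℚ)/((i:ℚ)+1) + 1/((J-1-i:ℕ):ℚ)) := by
      rw [Finset.sum_add_distrib, ← hS, ← hS2]
    rw [e1, hT, Finset.mul_sum]
    apply Finset.sum_congr rfl
    intro i hi
    obtain ⟨ha, hb, hab⟩ := hQfact i hi
    field_simp
    linear_combination hab
  set V := ∑ i ∈ F, (1/((i:ℚ)+1)) * (1/((i:ℚ)+1)) * (1/((J-1-i:ℕ):ℚ)) with hV
  set U := ∑ i ∈ F, (1/((i:ℚ)+1)) * (1/((i:ℚ)+1)) with hU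
  have hTC : T = (J:ℚ) * V - U := by
    rw [hT, hV, hU, Finset.mul_sum, ← Finset.sum_sub_distrib]
    apply Finset.sum_congr rfl
    intro i hi
    obtain ⟨ha, hb, hab⟩ := hQfact i hi
    rw [← hab]
    field_simp
    ring
  -- Step D : Good p 2 U
  set Z : ℕ := ∑ i ∈ F, (PH.ginv p (i+1))^2 with hZ
  have hZcast : (Z:ℚ) = ∑ i ∈ F, ((PH.ginv p (i+1) : ℕ):ℚ)^2 := by
    rw [hZ]
    push_cast
    rfl
  have hUZ : PH.Good p 2 (U - (Z:ℚ)) := by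
    rw [hU, hZcast, ← Finset.sum_sub_distrib]
    apply PH.good_sum hp
    intro i hi
    obtain ⟨h1, h2, h3, h4⟩ := hFfact i hi
    have hcast : ((i+1:ℕ):ℚ) = (i:ℚ)+1 := by push_cast; ring
    rw [← hcast]
    exact PH.good_inv_sq hp h2
  have hZdvd : p^2 ∣ Z := by
    rw [hZ, hF, hm]
    exact PH.p_sq_dvd_Z hp hp5 m
  have hGU : PH.Good p 2 U := by
    have h6 := PH.good_add hp hUZ (PH.good_natCast hp hZdvd)
    simpa using h6
  have hGJ : PH.Good p 2 ((J:ℚ)) := PH.good_natCast hp hdvd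
  have hone_div : ∀ i ∈ F, PH.Good p 0 ((1:ℚ)/((i:ℚ)+1)) := by
    intro i hi
    obtain ⟨h1, h2, h3, h4⟩ := hFfact i hi
    have hcast : ((i+1:ℕ):ℚ) = (i:ℚ)+1 := by push_cast; ring
    rw [← hcast]
    exact PH.good_one_div hp h2
  have hone_div' : ∀ i ∈ F, PH.Good p 0 ((1:ℚ)/((J-1-i:ℕ):ℚ)) := by
    intro i hi
    obtain ⟨h1, h2, h3, h4⟩ := hFfact i hi
    exact PH.good_one_div hp h3
  have hGV : PH.Good p 0 V := by
    rw [hV]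
    apply PH.good_sum hp
    intro i hi
    exact PH.good_mul hp (PH.good_mul hp (hone_div i hi) (hone_div i hi)) (hone_div' i hi)
  have hGT : PH.Good p 2 T := by
    rw [hTC]
    exact PH.good_sub hp (PH.good_mul hp hGJ hGV) hGU
  have hnd2 : ¬ p ∣ 2 := fun h => by have := Nat.le_of_dvd (by norm_num) h; omega
  have hS4 : PH.Good p 4 S := by
    have h2S' : S = (1/((2:ℕ):ℚ)) * ((J:ℚ) * T) := by
      rw [← h2S]; push_cast; ring
    rw [h2S']
    exact PH.good_exp_eq rfl (PH.good_mul hp (PH.good_one_div hp hnd2) (PH.good_mul hp hGJ hGT))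
  have hx : PH.Good p 5 ((p:ℚ) * S) :=
    PH.good_exp_eq rfl (PH.good_mul hp (PH.good_p hp) hS4)
  have hSpos : 0 < S := by
    rw [hS]
    apply Finset.sum_pos
    · intro i _; positivity
    · refine ⟨0, ?_⟩
      rw [hF, Finset.mem_filter, Finset.mem_range]
      exact ⟨by omega, by simpa using hp.one_lt.ne'⟩
  have hxne : (p:ℚ) * S ≠ 0 := by positivity
  rw [hA]
  have := PH.good_val hp hxne hx
  exact_mod_cast this
end

section
/- For every prime p ≥ 5 and every positive integer N, the congruence pH_{pN} ≡ H_N modulo p⁴ℤ_p (i.e. v_p(pH_{pN} − H_N) ≥ 4) holds if and only if v_p(H_{p−1}) ≥ 3 or p divides N. -/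
open Finset

def Sk (p k : ℕ) : ℚ := ∑ r ∈ range (p - 1), 1 / ((r : ℚ) + 1) ^ k
def T (p N : ℕ) : ℚ := ∑ j ∈ range N, ∑ r ∈ range (p - 1), 1 / ((j : ℚ) * p + r + 1)
def E (p N : ℕ) : ℚ :=
  ∑ j ∈ range N, ∑ r ∈ range (p - 1), (j : ℚ) ^ 3 / (((r : ℚ) + 1) ^ 3 * ((j : ℚ) * p + r + 1))
def U (p : ℕ) : ℚ := ∑ r ∈ range (p - 1), 1 / (((r : ℚ) + 1) ^ 2 * ((r : ℚ) + 1 - p))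
def V (p : ℕ) : ℚ := ∑ r ∈ range (p - 1), 1 / (((r : ℚ) + 1) ^ 3 * ((r : ℚ) + 1 - p))

lemma sum_range_castf {p : ℕ} [NeZero p] (f : ZMod p → ZMod p) :
    ∑ r ∈ range p, f (r : ZMod p) = ∑ x : ZMod p, f x := by
  refine Finset.sum_nbij' (i := fun r => (r : ZMod p)) (j := fun x => x.val) ?_ ?_ ?_ ?_ ?_
  · intro a _; exact mem_univ _
  · intro x _; exact mem_range.2 (ZMod.val_lt _)
  · intro r hr; exact ZMod.val_cast_of_lt (mem_range.1 hr)
  · intro x _; exact ZMod.natCast_zmod_val _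
  · intro r _; rfl

lemma inv_pow_sum_eq_zero {p : ℕ} [hp : Fact p.Prime] {k : ℕ} (hk : 0 < k) (hk2 : k < p - 1) :
    ∑ r ∈ range (p - 1), (((r + 1 : ℕ) : ZMod p))⁻¹ ^ k = 0 := by
  have hcard : Fintype.card (ZMod p) = p := ZMod.card p
  have hpos : 0 < p - 1 - k := by omega
  have key : ∀ x : ZMod p, (x⁻¹) ^ k = x ^ (p - 1 - k) := by
    intro x
    rcases eq_or_ne x 0 with rfl | hx
    · rw [inv_zero, zero_pow hk.ne', zero_pow hpos.ne']
    · have h1 : x ^ (p - 1 - k) * x ^ k = 1 := by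
        rw [← pow_add, Nat.sub_add_cancel hk2.le, ZMod.pow_card_sub_one_eq_one hx]
      rw [inv_pow, eq_comm]
      exact eq_inv_of_mul_eq_one_left h1
  have hsum : ∑ r ∈ range ((p-1)+1), (((r:ℕ) : ZMod p))⁻¹ ^ k
      = ∑ r ∈ range (p - 1), (((r + 1 : ℕ) : ZMod p))⁻¹ ^ k + (((0:ℕ) : ZMod p))⁻¹ ^ k :=
    Finset.sum_range_succ' (fun m => ((m : ZMod p))⁻¹ ^ k) (p - 1)
  have hps : (p-1) + 1 = p := Nat.succ_pred_eq_of_pos hp.out.pos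
  rw [hps] at hsum
  have hzz : ∑ r ∈ range p, ((r : ZMod p))⁻¹ ^ k = 0 := by
    rw [sum_range_castf (fun x => (x⁻¹) ^ k)]
    simp_rw [key]
    exact FiniteField.sum_pow_lt_card_sub_one (K := ZMod p) (p - 1 - k) (by omega)
  rw [hzz] at hsum
  rw [Nat.cast_zero, inv_zero, zero_pow hk.ne', add_zero] at hsum
  exact hsum.symm



lemma norm_Sk {p : ℕ} [hp : Fact p.Prime] {k : ℕ} (hk : 0 < k) (hk2 : k < p - 1) :
    padicNorm p (Sk p k) ≤ (p : ℚ) ^ (-1 : ℤ) := by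
  have hp1 : 1 ≤ p - 1 := by have := hp.out.two_le; omega
  set F : ℕ := (p - 1).factorial with hF
  have hFdvd : ∀ r ∈ range (p - 1), (r + 1) ∣ F := fun r hr =>
    Nat.dvd_factorial (Nat.succ_pos r) (mem_range.1 hr)
  set A : ℕ := ∑ r ∈ range (p - 1), (F / (r + 1)) ^ k with hA
  have hcast : ∀ r ∈ range (p - 1), ((F / (r + 1) : ℕ) : ℚ) = (F : ℚ) / ((r : ℚ) + 1) := by
    intro r hr
    rw [Nat.cast_div (hFdvd r hr) (by positivity)]
    push_cast; ring_nf
  have hSk : (A : ℚ) = Sk p k * (F : ℚ) ^ k := by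
    rw [hA, Nat.cast_sum, Sk, Finset.sum_mul]
    apply Finset.sum_congr rfl
    intro r hr
    have h1 : ((r : ℚ) + 1) ≠ 0 := by positivity
    push_cast
    rw [hcast r hr, div_pow]
    field_simp
  have hdvdA : p ∣ A := by
    rw [← ZMod.natCast_eq_zero_iff, hA, Nat.cast_sum]
    have hterm : ∀ r ∈ range (p - 1),
        (((F / (r + 1)) ^ k : ℕ) : ZMod p) = ((F : ZMod p) * (((r + 1 : ℕ) : ZMod p))⁻¹) ^ k := by
      intro r hr
      rw [Nat.cast_pow]
      congr 1
      have hne : ((r + 1 : ℕ) : ZMod p) ≠ 0 := by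
        rw [Ne, ZMod.natCast_eq_zero_iff]
        intro h
        have := Nat.le_of_dvd (Nat.succ_pos r) h
        have := mem_range.1 hr
        omega
      have hmul : ((F / (r + 1) : ℕ) : ZMod p) * ((r + 1 : ℕ) : ZMod p) = (F : ZMod p) := by
        rw [← Nat.cast_mul, Nat.div_mul_cancel (hFdvd r hr)]
      exact (eq_mul_inv_iff_mul_eq₀ hne).2 hmul
    rw [Finset.sum_congr rfl hterm]
    simp_rw [mul_pow, ← Finset.mul_sum]
    rw [inv_pow_sum_eq_zero hk hk2, mul_zero]
  have hFne : (F : ℚ) ≠ 0 := by positivity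
  have hAn : padicNorm p (A : ℚ) ≤ (p : ℚ) ^ (-1 : ℤ) := by
    have hd : ((p ^ 1 : ℕ) : ℤ) ∣ (A : ℤ) := by
      rw [pow_one]; exact_mod_cast hdvdA
    have := (padicNorm.dvd_iff_norm_le (p := p) (n := 1) (z := (A : ℤ))).1 hd
    simpa using this
  have hSkval : Sk p k = (A : ℚ) / (F : ℚ) ^ k := by
    rw [hSk]; field_simp
  rw [hSkval, padicNorm.div]
  have hFk : padicNorm p ((F : ℚ) ^ k) = 1 := by
    rw [← Nat.cast_pow, padicNorm.nat_eq_one_iff]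
    intro h
    have := (Nat.Prime.dvd_factorial hp.out).1 (hp.out.dvd_of_dvd_pow h)
    have := hp.out.two_le; omega
  rw [hFk, div_one]
  exact hAn



lemma H_key (p : ℕ) (hp : 2 ≤ p) : ∀ N : ℕ, (p : ℚ) * H (p * N) - H N = p * T p N := by
  intro N
  induction N with
  | zero => simp [H, T]
  | succ n ih =>
    have hps : p * (n + 1) = p * n + p := by ring
    have h1 : H (p * (n + 1)) = H (p * n) + ∑ k ∈ range p, (1:ℚ) / ((p * n + k : ℕ) + 1) := by
      rw [hps, H, H, Finset.sum_range_add]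
    have hpp : p = (p - 1) + 1 := by omega
    have h2 : ∑ k ∈ range p, (1:ℚ) / ((p * n + k : ℕ) + 1)
        = ∑ k ∈ range (p - 1), (1:ℚ) / ((p * n + k : ℕ) + 1) + 1 / ((p : ℚ) * (n + 1)) := by
      nth_rewrite 1 [hpp]
      rw [Finset.sum_range_succ]
      congr 1
      have : ((p * n + (p - 1) : ℕ) : ℚ) + 1 = (p : ℚ) * (n + 1) := by
        have : (p * n + (p - 1) : ℕ) + 1 = p * (n + 1) := by omega
        rw [show ((p * n + (p - 1) : ℕ) : ℚ) + 1 = (((p * n + (p - 1)) + 1 : ℕ) : ℚ) by push_cast; ring,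
          this]
        push_cast; ring
      rw [this]
    have h3 : H (n + 1) = H n + 1 / ((n : ℚ) + 1) := by
      rw [H, H, Finset.sum_range_succ]
    have h4 : T p (n + 1) = T p n + ∑ r ∈ range (p - 1), (1:ℚ) / ((n : ℚ) * p + r + 1) := by
      rw [T, T, Finset.sum_range_succ]
    have h5 : ∑ k ∈ range (p - 1), (1:ℚ) / ((p * n + k : ℕ) + 1)
        = ∑ r ∈ range (p - 1), (1:ℚ) / ((n : ℚ) * p + r + 1) := by
      apply Finset.sum_congr rfl
      intro r _
      push_cast
      ring_nf
    have hpn : (p : ℚ) ≠ 0 := by positivity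
    have hn1 : ((n : ℚ) + 1) ≠ 0 := by positivity
    have h6 : (p:ℚ) * (1 / ((p:ℚ) * ((n:ℚ)+1))) = 1/((n:ℚ)+1) := by
      field_simp
    rw [h1, h2, h3, h4, h5]
    linear_combination ih + h6


lemma aux_lt {p r : ℕ} (hr : r ∈ range (p - 1)) : ((r : ℚ) + 1) - p ≠ 0 := by
  have hr' : r < p - 1 := mem_range.1 hr
  have h2 : (r : ℚ) + 1 < p := by exact_mod_cast (by omega : r + 1 < p)
  linarith

lemma T_expand (p N : ℕ) :
    T p N = N * Sk p 1 - p * ((∑ j ∈ range N, (j : ℚ)) * Sk p 2)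
      + p ^ 2 * ((∑ j ∈ range N, (j : ℚ) ^ 2) * Sk p 3) - p ^ 3 * E p N := by
  have inner : ∀ j ∈ range N, ∑ r ∈ range (p - 1), 1 / ((j : ℚ) * p + r + 1)
      = Sk p 1 - (j : ℚ) * p * Sk p 2 + (j : ℚ) ^ 2 * p ^ 2 * Sk p 3
        - p ^ 3 * ∑ r ∈ range (p - 1), (j : ℚ) ^ 3 / (((r : ℚ) + 1) ^ 3 * ((j : ℚ) * p + r + 1)) := by
    intro j _
    rw [Sk, Sk, Sk, Finset.mul_sum, Finset.mul_sum, Finset.mul_sum, ← Finset.sum_sub_distrib,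
      ← Finset.sum_add_distrib, ← Finset.sum_sub_distrib]
    apply Finset.sum_congr rfl
    intro r _
    have ha : ((r : ℚ) + 1) ≠ 0 := by positivity
    have hax : ((j : ℚ) * p + r + 1) ≠ 0 := by positivity
    field_simp
    ring
  have e1 : (∑ j ∈ range N, (j : ℚ)) * p * Sk p 2 = ∑ j ∈ range N, (j : ℚ) * p * Sk p 2 := by
    rw [Finset.sum_mul, Finset.sum_mul]
  have e2 : (∑ j ∈ range N, (j : ℚ) ^ 2) * p ^ 2 * Sk p 3
      = ∑ j ∈ range N, (j : ℚ) ^ 2 * p ^ 2 * Sk p 3 := by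
    rw [Finset.sum_mul, Finset.sum_mul]
  have e3 : (p : ℚ) ^ 3 * E p N = ∑ j ∈ range N,
      (p : ℚ) ^ 3 * ∑ r ∈ range (p - 1), (j : ℚ) ^ 3 / (((r : ℚ) + 1) ^ 3 * ((j : ℚ) * p + r + 1)) := by
    rw [E, Finset.mul_sum]
  rw [T, Finset.sum_congr rfl inner, Finset.sum_sub_distrib, Finset.sum_add_distrib,
    Finset.sum_sub_distrib, Finset.sum_const, card_range, nsmul_eq_mul]
  linear_combination e1 - e2 + e3

lemma reflect_id (p : ℕ) : 2 * Sk p 1 = -(p * Sk p 2) - p ^ 2 * U p := by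
  have h1 : ∑ r ∈ range (p - 1), 1 / ((p : ℚ) - ((r : ℚ) + 1)) = Sk p 1 := by
    rw [Sk, ← Finset.sum_range_reflect]
    apply Finset.sum_congr rfl
    intro r hr
    have hr' : r < p - 1 := mem_range.1 hr
    have hc : ((p - 1 - 1 - r : ℕ) : ℚ) = (p : ℚ) - r - 2 := by
      have h' : (p - 1 - 1 - r : ℕ) + (r + 2) = p := by omega
      have := congrArg (Nat.cast : ℕ → ℚ) h'
      push_cast at this
      linarith
    rw [hc, pow_one]
    congr 1
    ring
  have h2 : ∀ r ∈ range (p - 1), 1 / ((p : ℚ) - ((r : ℚ) + 1))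
      = -(1 / ((r:ℚ)+1)^1) - p * (1 / ((r:ℚ)+1)^2)
        - p^2 * (1 / (((r:ℚ)+1)^2 * ((r:ℚ)+1-(p:ℚ)))) := by
    intro r hr
    have ha : ((r : ℚ) + 1) ≠ 0 := by positivity
    have hap := aux_lt hr
    have hpa : (p : ℚ) - ((r:ℚ) + 1) ≠ 0 := by intro h; apply hap; linarith
    field_simp
    ring
  have key : Sk p 1 = -(Sk p 1) - p * Sk p 2 - p ^ 2 * U p := by
    conv_lhs => rw [← h1]
    rw [Finset.sum_congr rfl h2, Finset.sum_sub_distrib, Finset.sum_sub_distrib,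
      Finset.sum_neg_distrib, ← Finset.mul_sum, ← Finset.mul_sum]
    simp only [Sk, U]
  linear_combination key

lemma U_eq (p : ℕ) : U p = Sk p 3 + p * V p := by
  rw [U, Sk, V, Finset.mul_sum, ← Finset.sum_add_distrib]
  apply Finset.sum_congr rfl
  intro r hr
  have ha : ((r : ℚ) + 1) ≠ 0 := by positivity
  have hap := aux_lt hr
  field_simp
  ring



lemma padicNorm_pow (p : ℕ) [Fact p.Prime] (x : ℚ) (k : ℕ) :
    padicNorm p (x ^ k) = padicNorm p x ^ k := by
  induction k with
  | zero => simp [padicNorm.one]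
  | succ n ih => rw [pow_succ, pow_succ, padicNorm.mul, ih]

section
variable {p : ℕ} [hp : Fact p.Prime]

lemma norm_r1 {r : ℕ} (hr : r ∈ range (p - 1)) : padicNorm p ((r : ℚ) + 1) = 1 := by
  have h : ((r : ℚ) + 1) = ((r + 1 : ℕ) : ℚ) := by push_cast; ring
  rw [h, padicNorm.nat_eq_one_iff]
  intro h'
  have := Nat.le_of_dvd (Nat.succ_pos r) h'
  have := mem_range.1 hr
  omega

lemma norm_rp {r : ℕ} (hr : r ∈ range (p - 1)) : padicNorm p ((r : ℚ) + 1 - p) = 1 := by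
  have hr' : r < p - 1 := mem_range.1 hr
  have h : ((r : ℚ) + 1 - p) = -(((p - (r + 1) : ℕ) : ℚ)) := by
    have h' : (p - (r + 1) : ℕ) + (r + 1) = p := by omega
    have := congrArg (Nat.cast : ℕ → ℚ) h'
    push_cast at this
    linarith
  rw [h, padicNorm.neg, padicNorm.nat_eq_one_iff]
  intro h'
  have h1 : 0 < p - (r + 1) := by omega
  have := Nat.le_of_dvd h1 h'
  omega

lemma norm_jr {j r : ℕ} (hr : r ∈ range (p - 1)) :
    padicNorm p ((j : ℚ) * p + r + 1) = 1 := by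
  have h : ((j : ℚ) * p + r + 1) = ((j * p + (r + 1) : ℕ) : ℚ) := by push_cast; ring
  rw [h, padicNorm.nat_eq_one_iff]
  intro h'
  have hr' : r < p - 1 := mem_range.1 hr
  have h2 : p ∣ r + 1 := (Nat.dvd_add_right (dvd_mul_left p j)).mp h'
  have := Nat.le_of_dvd (Nat.succ_pos r) h2
  omega

lemma norm_V : padicNorm p (V p) ≤ 1 := by
  apply padicNorm.sum_le' _ zero_le_one
  intro r hr
  rw [padicNorm.div, padicNorm.mul, padicNorm_pow, norm_r1 hr, norm_rp hr, padicNorm.one]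
  norm_num

lemma norm_E (N : ℕ) : padicNorm p (E p N) ≤ 1 := by
  apply padicNorm.sum_le' _ zero_le_one
  intro j _
  apply padicNorm.sum_le' _ zero_le_one
  intro r hr
  rw [padicNorm.div, padicNorm.mul, padicNorm_pow, padicNorm_pow, norm_r1 hr, norm_jr hr]
  have h1 : padicNorm p ((j : ℚ)) ≤ 1 := padicNorm.of_nat j
  have h0 : 0 ≤ padicNorm p ((j : ℚ)) := padicNorm.nonneg _
  norm_num
  nlinarith [pow_le_one₀ h0 h1 (n := 3)]

lemma pnorm_mul_le {a b s t : ℚ} (ha : padicNorm p a ≤ s) (hb : padicNorm p b ≤ t) :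
    padicNorm p (a * b) ≤ s * t := by
  rw [padicNorm.mul]
  exact mul_le_mul ha hb (padicNorm.nonneg b) (le_trans (padicNorm.nonneg a) ha)

lemma q_pos : (0 : ℚ) < p := by
  have := hp.out.two_le; positivity

lemma q_one_lt : (1 : ℚ) < p := by
  have h := hp.out.two_le
  have : (2 : ℚ) ≤ p := by exact_mod_cast h
  linarith

lemma norm_p_eq : padicNorm p ((p : ℚ)) = (p : ℚ) ^ (-1 : ℤ) := by
  rw [padicNorm.padicNorm_p_of_prime, zpow_neg_one]

lemma zp_add (a b : ℤ) : (p : ℚ) ^ a * (p : ℚ) ^ b = (p : ℚ) ^ (a + b) :=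
  (zpow_add₀ (ne_of_gt (q_pos (p := p))) a b).symm

lemma zp_le {a b : ℤ} (h : a ≤ b) : (p : ℚ) ^ a ≤ (p : ℚ) ^ b :=
  zpow_le_zpow_right₀ (le_of_lt (q_one_lt (p := p))) h

lemma norm_U (hp5 : 5 ≤ p) : padicNorm p (U p) ≤ (p : ℚ) ^ (-1 : ℤ) := by
  rw [U_eq p]
  apply le_trans padicNorm.nonarchimedean
  apply max_le
  · exact norm_Sk (by norm_num) (by omega)
  · have := pnorm_mul_le (p := p) (le_of_eq (norm_p_eq (p := p))) (norm_V (p := p))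
    rwa [mul_one] at this

lemma wolstenholme (hp5 : 5 ≤ p) : padicNorm p (Sk p 1) ≤ (p : ℚ) ^ (-2 : ℤ) := by
  have h2 : padicNorm p (2 : ℚ) = 1 := by
    rw [show (2 : ℚ) = ((2 : ℤ) : ℚ) by norm_num, padicNorm.int_eq_one_iff]
    intro h
    have := Int.le_of_dvd (by norm_num) h
    omega
  have key : padicNorm p (Sk p 1) = padicNorm p (2 * Sk p 1) := by
    rw [padicNorm.mul, h2, one_mul]
  rw [key, reflect_id p]
  have h3 : -(↑p * Sk p 2) - ↑p ^ 2 * U p = (-((p:ℚ) * Sk p 2)) - ((p:ℚ) ^ 2 * U p) := by ring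
  rw [h3]
  apply le_trans padicNorm.sub
  apply max_le
  · rw [padicNorm.neg]
    have := pnorm_mul_le (p := p) (le_of_eq (norm_p_eq (p := p)))
      (norm_Sk (p := p) (k := 2) (by norm_num) (by omega))
    rwa [zp_add, show ((-1) + (-1) : ℤ) = -2 by norm_num] at this
  · have hpow : padicNorm p ((p : ℚ) ^ 2) = (p : ℚ) ^ (-2 : ℤ) := by
      rw [padicNorm_pow, norm_p_eq, ← zpow_natCast, ← zpow_mul]
      norm_num
    have := pnorm_mul_le (p := p) (le_of_eq hpow) (norm_U hp5)
    rw [zp_add, show ((-2) + (-1) : ℤ) = -3 by norm_num] at this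
    exact this.trans (zp_le (by norm_num))

lemma gauss (N : ℕ) : (∑ j ∈ range N, (j : ℚ)) * 2 = (N : ℚ) ^ 2 - N := by
  induction N with
  | zero => simp
  | succ n ih =>
    rw [Finset.sum_range_succ, add_mul, ih]
    push_cast
    ring

lemma main_cong (hp5 : 5 ≤ p) (N : ℕ) :
    padicNorm p (((p : ℚ) * H (p * N) - H N) - (p : ℚ) * (N : ℚ) ^ 2 * Sk p 1)
      ≤ (p : ℚ) ^ (-4 : ℤ) := by
  have h1 := H_key p (by omega) N
  have h2 := T_expand p N
  have h3 := reflect_id p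
  have h4 := gauss N
  have hdiff : ((p : ℚ) * H (p * N) - H N) - (p : ℚ) * (N : ℚ) ^ 2 * Sk p 1
      = ((p : ℚ) ^ 3 * ((∑ j ∈ range N, (j : ℚ)) * U p)
          + (p : ℚ) ^ 3 * ((∑ j ∈ range N, (j : ℚ) ^ 2) * Sk p 3))
        - (p : ℚ) ^ 4 * E p N := by
    linear_combination h1 + (p : ℚ) * h2 - (p : ℚ) * (∑ j ∈ range N, (j : ℚ)) * h3
      + (p : ℚ) * Sk p 1 * h4
  rw [hdiff]
  have hp3 : padicNorm p ((p : ℚ) ^ 3) = (p : ℚ) ^ (-3 : ℤ) := by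
    rw [padicNorm_pow, norm_p_eq, ← zpow_natCast, ← zpow_mul]; norm_num
  have hp4 : padicNorm p ((p : ℚ) ^ 4) = (p : ℚ) ^ (-4 : ℤ) := by
    rw [padicNorm_pow, norm_p_eq, ← zpow_natCast, ← zpow_mul]; norm_num
  have hc1 : padicNorm p (∑ j ∈ range N, (j : ℚ)) ≤ 1 := by
    rw [show (∑ j ∈ range N, (j : ℚ)) = ((∑ j ∈ range N, j : ℕ) : ℚ) by push_cast; rfl]
    exact padicNorm.of_nat _
  have hc2 : padicNorm p (∑ j ∈ range N, (j : ℚ) ^ 2) ≤ 1 := by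
    rw [show (∑ j ∈ range N, (j : ℚ) ^ 2) = ((∑ j ∈ range N, j ^ 2 : ℕ) : ℚ) by push_cast; rfl]
    exact padicNorm.of_nat _
  apply le_trans padicNorm.sub
  apply max_le
  · apply le_trans padicNorm.nonarchimedean
    apply max_le
    · have hb : padicNorm p ((∑ j ∈ range N, (j : ℚ)) * U p) ≤ 1 * (p : ℚ) ^ (-1 : ℤ) :=
        pnorm_mul_le hc1 (norm_U hp5)
      have := pnorm_mul_le (p := p) (le_of_eq hp3) hb
      rwa [one_mul, zp_add, show ((-3) + (-1) : ℤ) = -4 by norm_num] at this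
    · have hb : padicNorm p ((∑ j ∈ range N, (j : ℚ) ^ 2) * Sk p 3) ≤ 1 * (p : ℚ) ^ (-1 : ℤ) :=
        pnorm_mul_le hc2 (norm_Sk (by norm_num) (by omega))
      have := pnorm_mul_le (p := p) (le_of_eq hp3) hb
      rwa [one_mul, zp_add, show ((-3) + (-1) : ℤ) = -4 by norm_num] at this
  · have := pnorm_mul_le (p := p) (le_of_eq hp4) (norm_E (p := p) N)
    rwa [mul_one] at this

lemma val_iff {x : ℚ} (hx : x ≠ 0) (n : ℤ) :
    n ≤ padicValRat p x ↔ padicNorm p x ≤ (p : ℚ) ^ (-n) := by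
  rw [padicNorm.eq_zpow_of_nonzero hx, zpow_le_zpow_iff_right₀ (q_one_lt (p := p)), neg_le_neg_iff]

end

theorem p_mul_harmonic_congr_fourth_iff (p N : ℕ) (hp : p.Prime) (hp5 : 5 ≤ p)
    (hN : 1 ≤ N) :
    4 ≤ padicValRat p ((p : ℚ) * H (p * N) - H N) ↔
      3 ≤ padicValRat p (H (p - 1)) ∨ p ∣ N := by
  haveI : Fact p.Prime := ⟨hp⟩
  have hps : 2 ≤ p := hp.two_le
  have hrne : (range (p - 1)).Nonempty := Finset.nonempty_range_iff.2 (by omega)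
  have hNne : (range N).Nonempty := Finset.nonempty_range_iff.2 (by omega)
  have hT_pos : 0 < T p N := by
    apply Finset.sum_pos _ hNne
    intro j _
    apply Finset.sum_pos _ hrne
    intro r _
    positivity
  have hD_ne : ((p : ℚ) * H (p * N) - H N) ≠ 0 := by
    rw [H_key p hps N]
    have hq : (0:ℚ) < p := by positivity
    positivity
  have hS1_pos : 0 < Sk p 1 := by
    apply Finset.sum_pos _ hrne
    intro r _
    positivity
  have hH1 : H (p - 1) = Sk p 1 := by simp [H, Sk]
  rw [val_iff hD_ne 4, hH1, val_iff (ne_of_gt hS1_pos) 3]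
  have hmc := main_cong (p := p) hp5 N
  set D := (p : ℚ) * H (p * N) - H N with hD
  set M := (p : ℚ) * (N : ℚ) ^ 2 * Sk p 1 with hM
  have equiv1 : padicNorm p D ≤ (p : ℚ) ^ (-(4:ℤ)) ↔ padicNorm p M ≤ (p : ℚ) ^ (-(4:ℤ)) := by
    constructor
    · intro h
      have hMD : M = D - (D - M) := by ring
      rw [hMD]
      exact le_trans padicNorm.sub (max_le h hmc)
    · intro h
      have hDM : D = M + (D - M) := by ring
      rw [hDM]
      exact le_trans padicNorm.nonarchimedean (max_le h hmc)
  rw [equiv1]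
  have hMnorm : padicNorm p M
      = (p : ℚ) ^ (-1 : ℤ) * padicNorm p ((N : ℚ) ^ 2) * padicNorm p (Sk p 1) := by
    rw [hM, padicNorm.mul, padicNorm.mul, norm_p_eq]
  by_cases hdvd : p ∣ N
  · simp only [hdvd, or_true, iff_true]
    have hN2 : padicNorm p ((N : ℚ) ^ 2) ≤ (p : ℚ) ^ (-2 : ℤ) := by
      have hd : ((p ^ 2 : ℕ) : ℤ) ∣ ((N ^ 2 : ℕ) : ℤ) := by
        exact_mod_cast pow_dvd_pow_of_dvd hdvd 2
      have h := (padicNorm.dvd_iff_norm_le (p := p) (n := 2) (z := ((N ^ 2 : ℕ) : ℤ))).1 hd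
      rw [show (((N ^ 2 : ℕ) : ℤ) : ℚ) = (N : ℚ) ^ 2 by push_cast; ring] at h
      exact_mod_cast h
    rw [hMnorm]
    have hb : (p : ℚ) ^ (-1 : ℤ) * padicNorm p ((N : ℚ) ^ 2) * padicNorm p (Sk p 1)
        ≤ (p : ℚ) ^ (-1 : ℤ) * (p : ℚ) ^ (-2 : ℤ) * (p : ℚ) ^ (-2 : ℤ) := by
      apply mul_le_mul _ (wolstenholme hp5) (padicNorm.nonneg _) (by positivity)
      apply mul_le_mul le_rfl hN2 (padicNorm.nonneg _) (by positivity)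
    apply hb.trans
    rw [zp_add, zp_add]
    exact zp_le (by norm_num)
  · simp only [hdvd, or_false]
    have hN1 : padicNorm p ((N : ℚ) ^ 2) = 1 := by
      rw [show ((N : ℚ) ^ 2) = ((N ^ 2 : ℕ) : ℚ) by push_cast; ring, padicNorm.nat_eq_one_iff]
      intro h
      exact hdvd (hp.dvd_of_dvd_pow h)
    rw [hMnorm, hN1, mul_one]
    rw [show ((p : ℚ) ^ (-(4:ℤ))) = (p : ℚ) ^ (-1 : ℤ) * (p : ℚ) ^ (-3 : ℤ) by
      rw [zp_add]; norm_num]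
    rw [mul_le_mul_iff_of_pos_left (by positivity : (0:ℚ) < (p : ℚ) ^ (-1 : ℤ))]
end

section
/- For every prime p ≥ 5, we have H_{p−1} ≡ −(p/2)·H_{p−1}^{(2)} modulo p³ℤ_p, where H_m^{(2)} = ∑_{n=1}^m 1/n². -/
lemma pair_key (P n m : ℚ) (hn : n ≠ 0) (hm : m ≠ 0) (h : n + m = P) :
    (1/n + P/2 * (1/n^2)) + (1/m + P/2 * (1/m^2)) = P^3 / (2*(n^2*m^2)) := by
  subst h; field_simp; ring

theorem harmonic_congr_second_order (p : ℕ) (hp : p.Prime) (hp5 : 5 ≤ p) :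
    padicNorm p (H (p - 1) + ((p : ℚ) / 2) * ∑ n ∈ Finset.range (p - 1), (1 : ℚ) / ((n : ℚ) + 1) ^ 2)
      ≤ (p : ℚ) ^ (-3 : ℤ) := by
  haveI : Fact p.Prime := ⟨hp⟩
  have hp1 : 1 < p := lt_of_lt_of_le (by norm_num) hp5
  set f : ℕ → ℚ := fun i => 1/((i:ℚ)+1) + (p:ℚ)/2 * (1/((i:ℚ)+1)^2) with hf
  set E := H (p - 1) + ((p : ℚ) / 2) * ∑ n ∈ Finset.range (p - 1), (1 : ℚ) / ((n : ℚ) + 1) ^ 2 with hE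
  have hEsum : E = ∑ i ∈ Finset.range (p-1), f i := by
    rw [hE, H, Finset.mul_sum, ← Finset.sum_add_distrib]
  set T : ℚ := ∑ i ∈ Finset.range (p-1), (1:ℚ) / ((4 * (i+1)^2 * (p-1-i)^2 : ℕ) : ℚ) with hT
  have key : E = (p:ℚ)^3 * T := by
    have h2 : 2 * E = 2 * ((p:ℚ)^3 * T) := by
      have hrefl : E = ∑ i ∈ Finset.range (p-1), f (p - 1 - 1 - i) := by
        rw [hEsum, Finset.sum_range_reflect]
      calc 2 * E = E + E := two_mul E
        _ = ∑ i ∈ Finset.range (p-1), (f i + f (p - 1 - 1 - i)) := by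
            rw [Finset.sum_add_distrib, ← hEsum, ← hrefl]
        _ = ∑ i ∈ Finset.range (p-1), (p:ℚ)^3 / (2 * (((i:ℚ)+1)^2 * (((p-1-i : ℕ):ℚ))^2)) := by
            apply Finset.sum_congr rfl
            intro i hi
            rw [Finset.mem_range] at hi
            have him : i ≤ p - 1 := le_of_lt hi
            have hm1 : 1 ≤ p - 1 - i := by omega
            have hcast : ((p - 1 - 1 - i : ℕ) : ℚ) + 1 = ((p - 1 - i : ℕ) : ℚ) := by
              have : p - 1 - 1 - i + 1 = p - 1 - i := by omega
              rw [← this]; push_cast; ring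
            have hsum : ((i:ℚ)+1) + ((p-1-i : ℕ):ℚ) = (p:ℚ) := by
              have : (i + 1) + (p - 1 - i) = p := by omega
              exact_mod_cast this
            have hn0 : ((i:ℚ)+1) ≠ 0 := by positivity
            have hm0 : (((p-1-i : ℕ):ℚ)) ≠ 0 := by
              have : 0 < ((p-1-i : ℕ):ℚ) := by exact_mod_cast hm1
              linarith
            simp only [hf, hcast]
            exact pair_key (p:ℚ) _ _ hn0 hm0 hsum
        _ = 2 * ((p:ℚ)^3 * T) := by
            rw [hT, Finset.mul_sum, Finset.mul_sum]
            apply Finset.sum_congr rfl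
            intro i hi
            rw [Finset.mem_range] at hi
            have hm1 : 1 ≤ p - 1 - i := by omega
            have hn0 : ((i:ℚ)+1) ≠ 0 := by positivity
            have hm0 : (((p-1-i : ℕ):ℚ)) ≠ 0 := by
              have : 0 < ((p-1-i : ℕ):ℚ) := by exact_mod_cast hm1
              linarith
            push_cast
            field_simp
            ring
    exact mul_left_cancel₀ (by norm_num) h2
  rw [key, padicNorm.mul]
  have hppow : padicNorm p ((p:ℚ)^3) = (p:ℚ)^(-3:ℤ) := by
    have := padicNorm.padicNorm_p (p := p) hp1
    rw [show ((p:ℚ)^3) = (p:ℚ)*(p:ℚ)*(p:ℚ) by ring, padicNorm.mul, padicNorm.mul, this]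
    rw [show (-3:ℤ) = (-1) + (-1) + (-1) by norm_num]
    rw [zpow_add₀, zpow_add₀, zpow_neg_one] <;> positivity
  have hTnorm : padicNorm p T ≤ 1 := by
    apply padicNorm.sum_le' _ zero_le_one
    intro i hi
    rw [Finset.mem_range] at hi
    have hk : ¬ p ∣ (4 * (i+1)^2 * (p-1-i)^2) := by
      intro hdvd
      rcases (Nat.Prime.dvd_mul hp).1 hdvd with h | h
      · rcases (Nat.Prime.dvd_mul hp).1 h with h | h
        · have := Nat.le_of_dvd (by norm_num) h; omega
        · have := hp.dvd_of_dvd_pow h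
          have := Nat.le_of_dvd (by omega) this; omega
      · have := hp.dvd_of_dvd_pow h
        have h1 : 1 ≤ p - 1 - i := by omega
        have := Nat.le_of_dvd (by omega) this; omega
    rw [padicNorm.div, (padicNorm.nat_eq_one_iff _).2 hk, padicNorm.one, div_one]
  calc padicNorm p ((p:ℚ)^3) * padicNorm p T ≤ padicNorm p ((p:ℚ)^3) * 1 := by
        apply mul_le_mul_of_nonneg_left hTnorm (padicNorm.nonneg _)
    _ = (p:ℚ)^(-3:ℤ) := by rw [mul_one, hppow]
end
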